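/- arXiv:1505.02985 — 2 statements merged into one kernel-verified Lean document; each statement's English description precedes it below -/
import Mathlib

section
/- Assume that d+ > d− > 0 satisfy d+ − d− ≥ c√(d+ ln d+), where c > 0 is a sufficiently large absolute constant and d+ is bounded below by a sufficiently large absolute constant. Then the operator T = T_{d+,d−} has a unique skewed fixed point p*, and the iterates T^t(0,0,1) (starting from the point mass at 1) converge to p* as t → ∞. -/
open Filter Topology

attribute [local instance] Classical.propDecidable

set_option linter.unusedVariables false

noncomputable section


/-! ### Basic functions -/

/-- The clamping function `ψ` restricted to the integers. -/
def psiZ (x : ℤ) : ℤ := max (-1) (min 1 x)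

/-- The threshold function `ψ̃` restricted to the integers. -/
def tpsiZ (x : ℤ) : ℤ := if x ≤ -1 then -1 else 1

/-- `p : ℤ → ℝ` represents a probability measure on `{-1, 0, 1}`. -/
def IsProbOn3 (p : ℤ → ℝ) : Prop :=
  (∀ z, 0 ≤ p z) ∧ (∀ z : ℤ, z ∉ ({-1, 0, 1} : Set ℤ) → p z = 0) ∧ p (-1) + p 0 + p 1 = 1

/-- `p` is skewed: `p(1) ≥ 1 - d₊⁻¹⁰`. -/
def Skewed (dp : ℝ) (p : ℤ → ℝ) : Prop := 1 - (dp ^ 10)⁻¹ ≤ p 1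

/-- The point mass at `1`, i.e. `(0,0,1)`. -/
def delta1 : ℤ → ℝ := fun z => if z = 1 then 1 else 0

/-! ### The operator `T` -/

/-- Convolution of two mass functions on `ℤ`. -/
def convZ (a b : ℤ → ℝ) : ℤ → ℝ := fun z => ∑' w : ℤ, a w * b (z - w)

/-- `n`-fold convolution power (distribution of a sum of `n` i.i.d. copies). -/
def convPow (a : ℤ → ℝ) : ℕ → ℤ → ℝ
  | 0 => fun z => if z = 0 then 1 else 0
  | n + 1 => convZ (convPow a n) a

/-- Poisson mass function with mean `d`. -/
def poisP (d : ℝ) (k : ℕ) : ℝ := Real.exp (-d) * d ^ k / (Nat.factorial k)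

/-- Distribution of `-η` when `η` has distribution `a`. -/
def flipM (a : ℤ → ℝ) : ℤ → ℝ := fun z => a (-z)

/-- The distribution of `Z_p = ∑_{i=1}^{γ₊} η_i - ∑_{i=γ₊+1}^{γ₊+γ₋} η_i` where the `η_i`
are i.i.d. with distribution `p` and `γ₊ ~ Po(d₊)`, `γ₋ ~ Po(d₋)` are independent. -/
def Zdist (dp dm : ℝ) (p : ℤ → ℝ) : ℤ → ℝ := fun z =>
  ∑' k : ℕ, ∑' l : ℕ, poisP dp k * poisP dm l * convZ (convPow p k) (convPow (flipM p) l) z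

/-- The operator `𝒯 = 𝒯_{d₊,d₋}`: the distribution of `ψ(Z_p)`. -/
def Twp (dp dm : ℝ) (p : ℤ → ℝ) : ℤ → ℝ := fun z =>
  if z = 1 then ∑' m : ℕ, Zdist dp dm p (1 + (m : ℤ))
  else if z = 0 then Zdist dp dm p 0
  else if z = -1 then ∑' m : ℕ, Zdist dp dm p (-1 - (m : ℤ))
  else 0

/-- The value `Z` as a function of the outcomes `η : Fin (k+l) → ℤ`, where the first `k`
coordinates form the `γ₊`-group and the remaining `l` the `γ₋`-group. -/
def zsum (k l : ℕ) (η : Fin (k + l) → ℤ) : ℤ :=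
  (∑ j ∈ Finset.univ.filter (fun j : Fin (k + l) => (j : ℕ) < k), η j)
    - ∑ j ∈ Finset.univ.filter (fun j : Fin (k + l) => k ≤ (j : ℕ)), η j

/-- Conditional expectation of
`∑_{i=1}^{γ₊} 1{η_i = -ψ̃(Z)} + ∑_{i=γ₊+1}^{γ₊+γ₋} 1{η_i = ψ̃(Z)}` given `γ₊ = k, γ₋ = l`. -/
def innerPhi (p : ℤ → ℝ) (k l : ℕ) : ℝ :=
  ∑ η ∈ Fintype.piFinset (fun _ : Fin (k + l) => ({-1, 0, 1} : Finset ℤ)),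
    (∏ i, p (η i)) *
      (((Finset.univ.filter (fun i : Fin (k + l) =>
            (i : ℕ) < k ∧ η i = - tpsiZ (zsum k l η))).card : ℝ)
        + ((Finset.univ.filter (fun i : Fin (k + l) =>
            k ≤ (i : ℕ) ∧ η i = tpsiZ (zsum k l η))).card : ℝ))

/-- The functional `φ_{d₊,d₋}`. -/
def phiOp (dp dm : ℝ) (p : ℤ → ℝ) : ℝ :=
  (1 / 2) * ∑' k : ℕ, ∑' l : ℕ, poisP dp k * poisP dm l * innerPhi p k l

/-! ### The L¹-Wasserstein distance on measures on `{-1,0,1}` -/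

/-- `ℓ₁(p,q)`: infimum of `E |X - Y|` over couplings of `p` and `q`. -/
def ell1 (p q : ℤ → ℝ) : ℝ :=
  sInf { r | ∃ ν : ℤ × ℤ → ℝ, (∀ x y, 0 ≤ ν (x, y)) ∧
    (∀ x, ∑ y ∈ ({-1, 0, 1} : Finset ℤ), ν (x, y) = p x) ∧
    (∀ y, ∑ x ∈ ({-1, 0, 1} : Finset ℤ), ν (x, y) = q y) ∧
    r = ∑ x ∈ ({-1, 0, 1} : Finset ℤ), ∑ y ∈ ({-1, 0, 1} : Finset ℤ),
          |(x : ℝ) - (y : ℝ)| * ν (x, y) }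





/-! ### Graphs: restriction, cuts, the core, Warning Propagation -/

/-- Every neighbourhood in a graph on a finite vertex type is finite. -/
noncomputable instance fintypeNeighborSet {V : Type*} [Fintype V] (G : SimpleGraph V) (v : V) :
    Fintype (G.neighborSet v) := Fintype.ofFinite _

/-- The subgraph of `G` consisting of the edges inside `S` (the induced subgraph on `S`,
viewed as a graph on the ambient vertex set; vertices outside `S` are isolated). -/
def restrictG {V : Type*} (G : SimpleGraph V) (S : Set V) : SimpleGraph V where
  Adj x y := G.Adj x y ∧ x ∈ S ∧ y ∈ S
  symm := ⟨fun x y h => ⟨G.adj_symm h.1, h.2.2, h.2.1⟩⟩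
  loopless := ⟨fun x h => G.irrefl h.1⟩

/-- `cut(G, σ)` for the boundary condition `σ` on `U`: the least number of edges of `G` joining
vertices of different colours, over all `±1`-colourings `τ` agreeing with `σ` on `U`.
(The set of ordered pairs of adjacent bichromatic vertices has twice the size of the
corresponding edge set.) -/
def cutW {V : Type*} (G : SimpleGraph V) (U : Set V) (σ : V → ℤ) : ℕ :=
  sInf { k | ∃ τ : V → ℤ, (∀ x, τ x = 1 ∨ τ x = -1) ∧ (∀ x ∈ U, τ x = σ x) ∧
    2 * k = {p : V × V | G.Adj p.1 p.2 ∧ τ p.1 ≠ τ p.2}.ncard }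

/-- The defining property of the core. -/
def CoreProp {V : Type*} (G : SimpleGraph V) (σ : V → ℤ) (dp dm c : ℝ) (U : Set V) : Prop :=
  ∀ u ∈ U,
    |(({w | G.Adj u w ∧ σ u * σ w = 1}.ncard : ℝ) - dp)| ≤ c / 4 * Real.sqrt (dp * Real.log dp) ∧
    |(({w | G.Adj u w ∧ σ u * σ w = -1}.ncard : ℝ) - dm)| ≤ c / 4 * Real.sqrt (dp * Real.log dp) ∧
    ({w | G.Adj u w} \ U).ncard ≤ 100

/-- The core: the largest subset satisfying `CoreProp`, i.e. the union of all such subsets. -/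
def coreSet {V : Type*} (G : SimpleGraph V) (σ : V → ℤ) (dp dm c : ℝ) : Set V :=
  ⋃₀ { U | CoreProp G σ dp dm c U }

/-- The sets `C_v^{(t)}`. -/
def CvStage {V : Type*} (G : SimpleGraph V) (K : Set V) (v : V) : ℕ → Set V
  | 0 => {v} ∪ {w | G.Adj v w}
  | t + 1 => CvStage G K v t ∪ ⋃ u ∈ (CvStage G K v t \ K), {w | G.Adj u w}

/-- The set `C_v = ⋃_t C_v^{(t)}`. -/
def CvSet {V : Type*} (G : SimpleGraph V) (K : Set V) (v : V) : Set V :=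
  ⋃ t, CvStage G K v t

/-- Warning Propagation messages `μ_{v→w}(t | G, σ)` with initial condition `σ` on `U`. -/
def wpMsg {V : Type*} (G : SimpleGraph V) [∀ v : V, Fintype (G.neighborSet v)]
    (U : Set V) (σ : V → ℤ) : ℕ → V → V → ℤ
  | 0, v, _ => if v ∈ U then σ v else 0
  | t + 1, v, w => psiZ (∑ u ∈ (G.neighborFinset v).erase w, wpMsg G U σ t u v)

/-- `μ_v(t|G,σ) = ∑_{w ∈ ∂v} μ_{w→v}(t|G,σ)`. -/
def wpVal {V : Type*} (G : SimpleGraph V) [∀ v : V, Fintype (G.neighborSet v)]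
    (U : Set V) (σ : V → ℤ) (t : ℕ) (v : V) : ℤ :=
  ∑ w ∈ G.neighborFinset v, wpMsg G U σ t w v

/-- The maximum distance from `w` to any vertex reachable from `w` in `G`. -/
def hgt {V : Type*} (G : SimpleGraph V) (w : V) : ℕ :=
  sSup ((G.dist w) '' { u | G.Reachable w u })

/-- `G_v`: the subgraph of `G` induced on `C_v` (ambient form). -/
def GvG {V : Type*} (G : SimpleGraph V) (K : Set V) (v : V) : SimpleGraph V :=
  restrictG G (CvSet G K v)

/-- `w_{↑v}`: the neighbour of `w` on the path from `w` to `v` in `G_v`. -/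
def parentOf {V : Type*} (G : SimpleGraph V) (K : Set V) (v w : V) : V :=
  @Classical.epsilon V ⟨v⟩ fun x =>
    (GvG G K v).Adj w x ∧ (GvG G K v).dist x v + 1 = (GvG G K v).dist w v

/-- `G_v` with the edge `{w, w_{↑v}}` removed. -/
def GdelG {V : Type*} (G : SimpleGraph V) (K : Set V) (v w : V) : SimpleGraph V :=
  (GvG G K v).deleteEdges {s(w, parentOf G K v w)}

/-- `h_{w→v}`: the maximum distance between `w` and any other vertex of `G_{w→v}`. -/
def hdir {V : Type*} (G : SimpleGraph V) (K : Set V) (v w : V) : ℕ :=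
  hgt (GdelG G K v w) w

/-- `C_{w→v}`: the vertex set of the component of `w` in `G_v` minus the edge `{w, w_{↑v}}`. -/
def Cdir {V : Type*} (G : SimpleGraph V) (K : Set V) (v w : V) : Set V :=
  { u | (GdelG G K v w).Reachable w u }

/-- `G_{w→v}`: the component of `w` in `G_v` minus the edge `{w, w_{↑v}}`. -/
def Gdir {V : Type*} (G : SimpleGraph V) (K : Set V) (v w : V) : SimpleGraph V :=
  restrictG (GdelG G K v w) (Cdir G K v w)

/-- `h_v`: the maximum distance between `v` and any other vertex of `G_v`. -/
def hvG {V : Type*} (G : SimpleGraph V) (K : Set V) (v : V) : ℕ :=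
  hgt (GvG G K v) v

/-- `μ*_{w→v} = μ_{w→w_{↑v}}(h_{w→v}+1 | G, σ)`. -/
def muStarDir {V : Type*} (G : SimpleGraph V) [∀ v : V, Fintype (G.neighborSet v)]
    (K : Set V) (σ : V → ℤ) (v w : V) : ℤ :=
  wpMsg G Set.univ σ (hdir G K v w + 1) w (parentOf G K v w)

/-- `μ*_v = μ_v(h_v+1 | G, σ)`. -/
def muStarV {V : Type*} (G : SimpleGraph V) [∀ v : V, Fintype (G.neighborSet v)]
    (K : Set V) (σ : V → ℤ) (v : V) : ℤ :=
  wpVal G Set.univ σ (hvG G K v + 1) v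

/-- The ball of radius `t` around `v` in `G`. -/
def ballSet {V : Type*} (G : SimpleGraph V) (v : V) (t : ℕ) : Set V :=
  { u | G.Reachable v u ∧ G.dist v u ≤ t }

lemma mem_ballSet_self {V : Type*} (G : SimpleGraph V) (v : V) (t : ℕ) : v ∈ ballSet G v t :=
  ⟨SimpleGraph.Reachable.refl v, by simp [SimpleGraph.dist_self]⟩

/-- `∂^t(G,r,σ) ≅ ∂^t(H,r',τ)`: a root- and label-preserving isomorphism between the
balls of radius `t`. -/
def RootedBallIso {V W : Type*} (G : SimpleGraph V) (σ : V → ℤ) (r : V)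
    (H : SimpleGraph W) (τ : W → ℤ) (r' : W) (t : ℕ) : Prop :=
  ∃ φ : (G.induce (ballSet G r t)) ≃g (H.induce (ballSet H r' t)),
    φ ⟨r, mem_ballSet_self G r t⟩ = ⟨r', mem_ballSet_self H r' t⟩ ∧
    ∀ x, τ (φ x).1 = σ x.1





/-! ### The planted bisection model -/

/-- `σ` is a balanced bipartition: the two class sizes differ by at most one. -/
def BalancedPart {n : ℕ} (σ : Fin n → Bool) : Prop :=
  (((Finset.univ.filter (fun v => σ v = true)).card : ℤ)
    - ((Finset.univ.filter (fun v => σ v = false)).card : ℤ)).natAbs ≤ 1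

/-- The number of balanced bipartitions of `Fin n`. -/
def Nbal (n : ℕ) : ℕ := (Finset.univ.filter (fun σ : Fin n → Bool => BalancedPart σ)).card

/-- The probability `p_{σ(v)σ(w)}` of the edge `{v,w}`, where `p₊ = 2d₊/n`, `p₋ = 2d₋/n`. -/
def pairProb (dp dm : ℝ) (n : ℕ) (σ : Fin n → Bool) (v w : Fin n) : ℝ :=
  if σ v = σ w then 2 * dp / n else 2 * dm / n

/-- The probability mass of an outcome `ω = (σ, g)` of the planted bisection model
`G(n, 2d₊/n, 2d₋/n)`: `σ` is a uniformly random balanced bipartition and, independently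
for each pair `v ≠ w`, the edge `{v,w}` is present with probability `p_{σ(v)σ(w)}`. -/
def pbMass (dp dm : ℝ) (n : ℕ) (ω : (Fin n → Bool) × (Fin n → Fin n → Bool)) : ℝ :=
  (if BalancedPart ω.1 ∧ (∀ v w, ω.2 v w = ω.2 w v) ∧ (∀ v, ω.2 v v = false)
    then ((Nbal n : ℝ))⁻¹ else 0) *
  ∏ p ∈ Finset.univ.filter (fun p : Fin n × Fin n => p.1 < p.2),
    (if ω.2 p.1 p.2 = true then pairProb dp dm n ω.1 p.1 p.2
      else 1 - pairProb dp dm n ω.1 p.1 p.2)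

/-- The probability of an event in the planted bisection model. -/
def pbPr (dp dm : ℝ) (n : ℕ) (A : (Fin n → Bool) × (Fin n → Fin n → Bool) → Prop) : ℝ :=
  ∑ ω ∈ Finset.univ.filter A, pbMass dp dm n ω

/-- Sign of a Boolean, as `±1`. -/
def sgnB (b : Bool) : ℤ := if b then 1 else -1

/-- The planted assignment `σ : [n] → {±1}` of an outcome. -/
def pbSigma {n : ℕ} (ω : (Fin n → Bool) × (Fin n → Fin n → Bool)) : Fin n → ℤ :=
  fun v => sgnB (ω.1 v)

/-- The graph of an outcome. -/
def pbGraph (n : ℕ) (g : Fin n → Fin n → Bool) : SimpleGraph (Fin n) :=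
  SimpleGraph.fromRel fun v w => g v w = true

/-- The minimum bisection width `bis(G)`: the least number of edges joining `S` and its
complement over all `S` with `||S| - |S̄|| ≤ 1`. -/
def bisWidth {n : ℕ} (G : SimpleGraph (Fin n)) : ℕ :=
  sInf { k | ∃ S : Finset (Fin n),
    ((S.card : ℤ) - ((n : ℤ) - (S.card : ℤ))).natAbs ≤ 1 ∧
    k = {p : Fin n × Fin n | G.Adj p.1 p.2 ∧ p.1 ∈ S ∧ p.2 ∉ S}.ncard }

/-! ### Finite rooted typed trees and the two-type Galton–Watson tree -/

/-- Finite rooted trees whose vertices carry a type in `ℤ` (used with types `±1`). -/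
inductive GWT : Type
  | node : ℤ → List GWT → GWT

instance : Inhabited GWT := ⟨.node 0 []⟩

/-- The type of the root. -/
def GWT.typeOf : GWT → ℤ
  | .node s _ => s

/-- The subtrees pending on the children of the root. -/
def GWT.childrenOf : GWT → List GWT
  | .node _ l => l

/-- Valid positions (vertices) of a tree, encoded as lists of child indices. -/
def GWT.valid : GWT → List ℕ → Prop
  | _, [] => True
  | T, i :: p => i < T.childrenOf.length ∧ GWT.valid (T.childrenOf.getD i default) p

/-- The type of the vertex at position `q`. -/
def GWT.typeAt : GWT → List ℕ → ℤ
  | T, [] => T.typeOf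
  | T, i :: p => GWT.typeAt (T.childrenOf.getD i default) p

/-- The tree as a simple graph on its set of positions. -/
def GWT.graph (T : GWT) : SimpleGraph { p : List ℕ // T.valid p } where
  Adj a b := (∃ i : ℕ, (b : List ℕ) = (a : List ℕ) ++ [i]) ∨
             (∃ i : ℕ, (a : List ℕ) = (b : List ℕ) ++ [i])
  symm := ⟨fun a b h => h.symm⟩
  loopless := ⟨fun a h => by
    rcases h with ⟨i, hi⟩ | ⟨i, hi⟩ <;>
      · have := congrArg List.length hi
        simp at this⟩

/-- The root of the tree. -/
def GWT.root (T : GWT) : { p : List ℕ // T.valid p } := ⟨[], trivial⟩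

/-- The type labelling of the vertices. -/
def GWT.lab (T : GWT) : { p : List ℕ // T.valid p } → ℤ := fun q => T.typeAt q.1

/-- The Warning Propagation message `μ_{r↑}(t)` sent by the root of a tree towards its
(imaginary) parent, when the messages are initialised with the types. -/
def GWT.rootMsg : ℕ → GWT → ℤ
  | 0, T => T.typeOf
  | t + 1, T => psiZ ((T.childrenOf.map (GWT.rootMsg t)).sum)

/-- The probability mass function of the depth-`t` truncation of the two-type Galton–Watson
tree with root type `s`, realised as a random *ordered* tree: the root spawns `Po(d₊ + d₋)`
children, each independently of type `s` with probability `d₊/(d₊+d₋)` and of type `-s`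
with probability `d₋/(d₊+d₋)`, and the subtrees pending on the children are independent
Galton–Watson trees truncated at depth `t-1`. -/
def ogwMass (dp dm : ℝ) : ℕ → ℤ → GWT → ℝ
  | 0, s, T => if T.typeOf = s ∧ T.childrenOf = [] then 1 else 0
  | t + 1, s, T =>
    if T.typeOf = s then
      Real.exp (-(dp + dm)) / (Nat.factorial T.childrenOf.length) *
        (T.childrenOf.map fun U => (if U.typeOf = s then dp else dm)
          * ogwMass dp dm t U.typeOf U).prod
    else 0


end


/-! ### Auxiliary development for the proof -/
set_option maxHeartbeats 1000000
noncomputable section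
namespace USFP
open ENNReal

lemma toReal_tsum {ι : Type*} (f : ι → ℝ≥0∞) (h : ∑' i, f i ≠ ⊤) :
    (∑' i, f i).toReal = ∑' i, (f i).toReal :=
  ENNReal.tsum_toReal_eq fun a => ne_top_of_le_ne_top h (ENNReal.le_tsum a)

lemma real_tsum_eq_toReal {ι : Type*} (f : ι → ℝ) (hf : ∀ i, 0 ≤ f i) :
    ∑' i, f i = (∑' i, ENNReal.ofReal (f i)).toReal := by
  by_cases h : Summable f
  · rw [← ENNReal.ofReal_tsum_of_nonneg hf h, ENNReal.toReal_ofReal (tsum_nonneg hf)]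
  · rw [tsum_eq_zero_of_not_summable h]
    have : ∑' i, ENNReal.ofReal (f i) = ⊤ := by
      by_contra h'
      apply h
      have := ENNReal.summable_toReal h'
      simpa only [ENNReal.toReal_ofReal (hf _)] using this
    simp [this]

lemma exp_tsum (x : ℝ) : Real.exp x = ∑' n : ℕ, x ^ n / n.factorial := by
  rw [Real.exp_eq_exp_ℝ, NormedSpace.exp_eq_tsum_div]

lemma ofReal_exp_tsum {x : ℝ} (hx : 0 ≤ x) :
    ∑' n : ℕ, ENNReal.ofReal (x ^ n / n.factorial) = ENNReal.ofReal (Real.exp x) := by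
  rw [exp_tsum, ENNReal.ofReal_tsum_of_nonneg (fun n => by positivity)
    (Real.summable_pow_div_factorial x)]

lemma tsum_int_nonneg (f : ℤ → ℝ≥0∞) (h : ∀ w : ℤ, w < 0 → f w = 0) :
    ∑' w : ℤ, f w = ∑' n : ℕ, f n := by
  refine (Function.Injective.tsum_eq (f := f) (fun a b hab => by exact_mod_cast hab) ?_).symm
  intro x hx
  rcases lt_or_ge x 0 with hlt | hge
  · exact absurd (h x hlt) hx
  · exact ⟨x.toNat, by omega⟩

lemma tsum_int_shift (a : ℤ) (f : ℤ → ℝ≥0∞) : ∑' z : ℤ, f (a + z) = ∑' z, f z :=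
  (Equiv.addLeft a).tsum_eq f

lemma tsum_int_neg (f : ℤ → ℝ≥0∞) : ∑' z : ℤ, f (-z) = ∑' z, f z :=
  (Equiv.neg ℤ).tsum_eq f

lemma tsum_nat_antidiagonal (F : ℕ → ℕ → ℝ≥0∞) :
    ∑' i, ∑' j, F i j = ∑' k, ∑ p ∈ Finset.HasAntidiagonal.antidiagonal k, F p.1 p.2 := by
  rw [← ENNReal.tsum_prod]
  have h1 : ∀ p : ℕ × ℕ, F p.1 p.2 = ∑' k : ℕ, if p.1 + p.2 = k then F p.1 p.2 else 0 := by
    intro p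
    rw [tsum_eq_single (p.1 + p.2) (fun k hk => by simp [Ne.symm hk])]
    simp
  calc ∑' p : ℕ × ℕ, F p.1 p.2 = ∑' (p : ℕ × ℕ) (k : ℕ), if p.1 + p.2 = k then F p.1 p.2 else 0 := by
        exact tsum_congr h1
    _ = ∑' (k : ℕ) (p : ℕ × ℕ), if p.1 + p.2 = k then F p.1 p.2 else 0 := ENNReal.tsum_comm
    _ = ∑' k, ∑ p ∈ Finset.HasAntidiagonal.antidiagonal k, F p.1 p.2 := by
        refine tsum_congr fun k => ?_
        rw [tsum_eq_sum (s := Finset.HasAntidiagonal.antidiagonal k)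
          (fun p hp => by simp [Finset.HasAntidiagonal.mem_antidiagonal] at hp; simp [hp])]
        exact Finset.sum_congr rfl fun p hp => by
          simp [Finset.HasAntidiagonal.mem_antidiagonal.mp hp]

/-- Mass functions on `ℤ` with values in `ℝ≥0∞`, as a convolution semiring. -/
structure CF where
  f : ℤ → ℝ≥0∞

namespace CF

@[ext] lemma ext {F G : CF} (h : ∀ z, F.f z = G.f z) : F = G := by
  cases F; cases G; simp only [mk.injEq]; funext z; exact h z

instance : Add CF := ⟨fun F G => ⟨fun z => F.f z + G.f z⟩⟩
instance : Zero CF := ⟨⟨fun _ => 0⟩⟩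
instance : Mul CF := ⟨fun F G => ⟨fun z => ∑' w : ℤ, F.f w * G.f (z - w)⟩⟩
instance : One CF := ⟨⟨fun z => if z = 0 then 1 else 0⟩⟩

@[simp] lemma add_apply (F G : CF) (z : ℤ) : (F + G).f z = F.f z + G.f z := rfl
@[simp] lemma zero_apply (z : ℤ) : (0 : CF).f z = 0 := rfl
lemma mul_apply (F G : CF) (z : ℤ) : (F * G).f z = ∑' w : ℤ, F.f w * G.f (z - w) := rfl
lemma one_apply (z : ℤ) : (1 : CF).f z = if z = 0 then 1 else 0 := rfl

lemma mul_apply' (F G : CF) (z : ℤ) :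
    (F * G).f z = ∑' (u : ℤ) (v : ℤ), F.f u * G.f v * (if u + v = z then 1 else 0) := by
  rw [mul_apply]
  refine tsum_congr fun u => ?_
  rw [tsum_eq_single (z - u) (fun v hv => by simp [sub_eq_iff_eq_add]; intro h; omega)]
  simp [mul_comm]

private lemma mul_canon (F G : CF) (z : ℤ) :
    (F * G).f z = ∑' (u : ℤ) (v : ℤ), F.f u * G.f (z - u - v) * (if v = 0 then 1 else 0) := by
  rw [mul_apply]
  refine tsum_congr fun u => ?_
  rw [tsum_eq_single 0 (fun v hv => by simp [hv])]
  simp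

instance : CommSemiring CF where
  add_assoc F G H := by ext z; exact add_assoc _ _ _
  zero_add F := by ext z; exact zero_add _
  add_zero F := by ext z; exact add_zero _
  add_comm F G := by ext z; exact add_comm _ _
  nsmul := nsmulRec
  mul_assoc F G H := by
    ext z
    rw [mul_apply, mul_apply]
    have lhs : ∑' w : ℤ, (F * G).f w * H.f (z - w)
        = ∑' (u : ℤ) (v : ℤ), F.f u * G.f v * H.f (z - u - v) := by
      calc ∑' w : ℤ, (F * G).f w * H.f (z - w)
          = ∑' (w : ℤ) (u : ℤ), F.f u * G.f (w - u) * H.f (z - w) := by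
            refine tsum_congr fun w => ?_
            rw [mul_apply, ENNReal.tsum_mul_right]
        _ = ∑' (u : ℤ) (w : ℤ), F.f u * G.f (w - u) * H.f (z - w) := ENNReal.tsum_comm
        _ = ∑' (u : ℤ) (v : ℤ), F.f u * G.f v * H.f (z - u - v) := by
            refine tsum_congr fun u => ?_
            rw [← tsum_int_shift u (fun w => F.f u * G.f (w - u) * H.f (z - w))]
            refine tsum_congr fun v => ?_
            simp only [add_sub_cancel_left]
            congr 2
            omega
    rw [lhs]
    refine tsum_congr fun u => ?_
    rw [mul_apply, ← ENNReal.tsum_mul_left]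
    exact tsum_congr fun v => mul_assoc _ _ _
  mul_comm F G := by
    ext z
    rw [mul_apply, mul_apply]
    rw [← (Equiv.subLeft z).tsum_eq (fun w => G.f w * F.f (z - w))]
    refine tsum_congr fun w => ?_
    simp only [Equiv.subLeft_apply, _root_.sub_sub_cancel]
    ring
  one_mul F := by
    ext z
    rw [mul_apply]
    rw [tsum_eq_single 0 (fun w hw => by simp [one_apply, hw])]
    simp [one_apply]
  mul_one F := by
    ext z
    rw [mul_apply]
    rw [tsum_eq_single z (fun w hw => by simp [one_apply, sub_eq_zero, Ne.symm hw])]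
    simp [one_apply]
  left_distrib F G H := by
    ext z
    rw [mul_apply, add_apply, mul_apply, mul_apply, ← ENNReal.tsum_add]
    exact tsum_congr fun w => by rw [add_apply, mul_add]
  right_distrib F G H := by
    ext z
    rw [mul_apply, add_apply, mul_apply, mul_apply, ← ENNReal.tsum_add]
    exact tsum_congr fun w => by rw [add_apply, add_mul]
  zero_mul F := by ext z; rw [mul_apply]; simp
  mul_zero F := by ext z; rw [mul_apply]; simp

/-- evaluation as an additive monoid hom -/
def evalHom (z : ℤ) : CF →+ ℝ≥0∞ where
  toFun F := F.f z
  map_zero' := rfl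
  map_add' _ _ := rfl

lemma sum_apply {ι : Type*} (s : Finset ι) (g : ι → CF) (z : ℤ) :
    (∑ i ∈ s, g i).f z = ∑ i ∈ s, (g i).f z := map_sum (evalHom z) g s

lemma nsmul_apply (n : ℕ) (F : CF) (z : ℤ) : (n • F).f z = n * F.f z := by
  have := map_nsmul (evalHom z) n F
  exact this.trans (nsmul_eq_mul _ _)

/-- single point mass -/
def single (x : ℤ) (r : ℝ≥0∞) : CF := ⟨fun z => if z = x then r else 0⟩

@[simp] lemma single_apply (x : ℤ) (r : ℝ≥0∞) (z : ℤ) :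
    (single x r).f z = if z = x then r else 0 := rfl

lemma single_mul (x : ℤ) (r : ℝ≥0∞) (F : CF) (z : ℤ) :
    (single x r * F).f z = r * F.f (z - x) := by
  rw [mul_apply, tsum_eq_single x (fun w hw => by simp [hw])]
  simp

lemma single_pow (x : ℤ) (r : ℝ≥0∞) (k : ℕ) :
    (single x r) ^ k = single (k * x) (r ^ k) := by
  induction k with
  | zero => ext z; simp [one_apply, single_apply]
  | succ n ih =>
    rw [pow_succ, ih, mul_comm]
    ext z
    rw [single_mul]
    simp only [single_apply]
    have hc : (((n+1 : ℕ) : ℤ) * x = (n : ℤ) * x + x) := by push_cast; ring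
    by_cases h : z - x = (n : ℤ) * x
    · rw [if_pos h, if_pos (by rw [hc]; omega), pow_succ, mul_comm]
    · rw [if_neg h, if_neg (by rw [hc]; omega), mul_zero]

/-- total mass -/
def mass (F : CF) : ℝ≥0∞ := ∑' z, F.f z

lemma mass_mul (F G : CF) : mass (F * G) = mass F * mass G := by
  unfold mass
  calc ∑' z, (F * G).f z = ∑' (z : ℤ) (w : ℤ), F.f w * G.f (z - w) := tsum_congr fun z => rfl
    _ = ∑' (w : ℤ) (z : ℤ), F.f w * G.f (z - w) := ENNReal.tsum_comm
    _ = ∑' w : ℤ, F.f w * ∑' z : ℤ, G.f (z - w) := by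
        exact tsum_congr fun w => ENNReal.tsum_mul_left
    _ = ∑' w : ℤ, F.f w * ∑' z : ℤ, G.f z := by
        refine tsum_congr fun w => ?_
        congr 1
        exact (Equiv.subRight w).tsum_eq G.f
    _ = mass F * mass G := by rw [ENNReal.tsum_mul_right]; rfl

lemma mass_one : mass (1 : CF) = 1 := by
  unfold mass
  rw [tsum_eq_single 0 (fun w hw => by simp [one_apply, hw])]
  simp [one_apply]

lemma mass_pow (F : CF) (k : ℕ) : mass (F ^ k) = (mass F) ^ k := by
  induction k with
  | zero => simpa [pow_zero] using mass_one
  | succ n ih => rw [pow_succ, mass_mul, ih, pow_succ]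

lemma apply_le_mass (F : CF) (z : ℤ) : F.f z ≤ mass F := ENNReal.le_tsum z

end CF
lemma choose_div_factorial {k j : ℕ} (hj : j ≤ k) :
    ((k.choose j : ℝ)) / k.factorial = 1 / (j.factorial * (k-j).factorial) := by
  have key : ((k.choose j : ℝ)) * j.factorial * (k-j).factorial = k.factorial := by
    exact_mod_cast Nat.choose_mul_factorial_mul_factorial hj
  have h1 : (0:ℝ) < j.factorial := by positivity
  have h2 : (0:ℝ) < (k-j).factorial := by positivity
  have h3 : (0:ℝ) < k.factorial := by positivity
  field_simp
  linarith [key]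

/-- unnormalized Poisson coefficient -/
def pc (u : ℝ) (k : ℕ) : ℝ≥0∞ := ENNReal.ofReal (u ^ k / k.factorial)

lemma pc_mul_choose {u : ℝ} (hu : 0 ≤ u) {k j : ℕ} (hj : j ≤ k) :
    pc u k * (k.choose j : ℝ≥0∞) = pc u j * pc u (k - j) := by
  unfold pc
  rw [← ENNReal.ofReal_natCast, ← ENNReal.ofReal_mul (by positivity),
      ← ENNReal.ofReal_mul (by positivity)]
  congr 1
  have := choose_div_factorial hj
  have h1 : (0:ℝ) < j.factorial := by positivity
  have h2 : (0:ℝ) < (k-j).factorial := by positivity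
  have h3 : (0:ℝ) < k.factorial := by positivity
  have hp : u ^ k = u ^ j * u ^ (k - j) := by rw [← pow_add, Nat.add_sub_cancel' hj]
  field_simp
  field_simp at this
  linear_combination (u^j * u^(k-j)) * this + ((k.choose j : ℝ) * (((j.factorial : ℝ)) * ((k-j).factorial : ℝ))) * hp

/-- `∑ k, e^{-u} u^k/k! ⬝ F^k` without the `e^{-u}` factor -/
def Wf (u : ℝ) (F : CF) : CF := ⟨fun z => ∑' k : ℕ, pc u k * (F ^ k).f z⟩

lemma Wf_mul_apply (u v : ℝ) (F G : CF) (z : ℤ) :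
    (Wf u F * Wf v G).f z = ∑' (i : ℕ) (j : ℕ), pc u i * pc v j * ((F^i) * (G^j)).f z := by
  rw [CF.mul_apply]
  calc ∑' w : ℤ, (Wf u F).f w * (Wf v G).f (z - w)
      = ∑' (w : ℤ) (i : ℕ) (j : ℕ), (pc u i * (F^i).f w) * (pc v j * (G^j).f (z - w)) := by
        refine tsum_congr fun w => ?_
        show (∑' i, pc u i * (F^i).f w) * (∑' j, pc v j * (G^j).f (z-w)) = _
        rw [← ENNReal.tsum_mul_right]
        exact tsum_congr fun i => ENNReal.tsum_mul_left.symm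
    _ = ∑' (i : ℕ) (w : ℤ) (j : ℕ), (pc u i * (F^i).f w) * (pc v j * (G^j).f (z - w)) :=
        ENNReal.tsum_comm
    _ = ∑' (i : ℕ) (j : ℕ) (w : ℤ), (pc u i * (F^i).f w) * (pc v j * (G^j).f (z - w)) :=
        tsum_congr fun i => ENNReal.tsum_comm
    _ = ∑' (i : ℕ) (j : ℕ), pc u i * pc v j * ((F^i) * (G^j)).f z := by
        refine tsum_congr fun i => tsum_congr fun j => ?_
        rw [CF.mul_apply, ← ENNReal.tsum_mul_left]
        refine tsum_congr fun w => ?_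
        ring

lemma Wf_add {u : ℝ} (hu : 0 ≤ u) (F G : CF) : Wf u (F + G) = Wf u F * Wf u G := by
  ext z
  rw [Wf_mul_apply, tsum_nat_antidiagonal (fun i j => pc u i * pc u j * ((F^i) * (G^j)).f z)]
  show ∑' k, pc u k * ((F + G) ^ k).f z = _
  refine tsum_congr fun k => ?_
  rw [(Commute.all F G).add_pow' k, CF.sum_apply, Finset.mul_sum]
  refine Finset.sum_congr rfl fun p hp => ?_
  have hpk : p.1 + p.2 = k := Finset.HasAntidiagonal.mem_antidiagonal.mp hp
  rw [CF.nsmul_apply]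
  have h1 : pc u k * ((k.choose p.1 : ℕ) : ℝ≥0∞) = pc u p.1 * pc u p.2 := by
    have := pc_mul_choose hu (k := k) (j := p.1) (by omega)
    rwa [show k - p.1 = p.2 by omega] at this
  calc pc u k * (((k.choose p.1 : ℕ) : ℝ≥0∞) * (F ^ p.1 * G ^ p.2).f z)
      = (pc u k * ((k.choose p.1 : ℕ) : ℝ≥0∞)) * (F ^ p.1 * G ^ p.2).f z := by ring
    _ = pc u p.1 * pc u p.2 * (F ^ p.1 * G ^ p.2).f z := by rw [h1]

/-- unnormalized Poisson mass function on ℤ (supported on `z ≥ 0`). -/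
def eVp (s : ℝ) (z : ℤ) : ℝ≥0∞ :=
  if 0 ≤ z then ENNReal.ofReal (s ^ z.toNat / z.toNat.factorial) else 0

def eVm (s : ℝ) (z : ℤ) : ℝ≥0∞ := eVp s (-z)

lemma Wf_single_one {u r : ℝ} (hu : 0 ≤ u) (hr : 0 ≤ r) :
    Wf u (CF.single 1 (ENNReal.ofReal r)) = ⟨eVp (u*r)⟩ := by
  ext z
  show ∑' k : ℕ, pc u k * (CF.single 1 (ENNReal.ofReal r) ^ k).f z = eVp (u*r) z
  have h : ∀ k : ℕ, (CF.single 1 (ENNReal.ofReal r) ^ k).f z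
      = if z = k then (ENNReal.ofReal r)^k else 0 := by
    intro k; rw [CF.single_pow]; simp
  simp only [h]
  rcases le_or_gt 0 z with hz | hz
  · rw [tsum_eq_single z.toNat (fun k hk => by rw [if_neg (by omega), mul_zero])]
    rw [if_pos (by omega)]
    unfold pc eVp
    rw [if_pos hz, ← ENNReal.ofReal_pow hr, ← ENNReal.ofReal_mul (by positivity)]
    congr 1
    rw [mul_pow]
    ring
  · rw [ENNReal.summable.tsum_eq_zero_iff |>.mpr (fun k => by rw [if_neg (by omega), mul_zero])]
    unfold eVp
    rw [if_neg (by omega)]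

lemma Wf_single_neg {u r : ℝ} (hu : 0 ≤ u) (hr : 0 ≤ r) :
    Wf u (CF.single (-1) (ENNReal.ofReal r)) = ⟨eVm (u*r)⟩ := by
  ext z
  show ∑' k : ℕ, pc u k * (CF.single (-1) (ENNReal.ofReal r) ^ k).f z = eVm (u*r) z
  have h : ∀ k : ℕ, (CF.single (-1) (ENNReal.ofReal r) ^ k).f z
      = if z = -(k:ℤ) then (ENNReal.ofReal r)^k else 0 := by
    intro k; rw [CF.single_pow]
    simp only [CF.single_apply]
    congr 1
    simp only [eq_iff_iff]
    omega
  simp only [h]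
  unfold eVm eVp
  rcases le_or_gt z 0 with hz | hz
  · rw [tsum_eq_single (-z).toNat (fun k hk => by rw [if_neg (by omega), mul_zero])]
    rw [if_pos (by omega), if_pos (by omega)]
    unfold pc
    rw [← ENNReal.ofReal_pow hr, ← ENNReal.ofReal_mul (by positivity)]
    congr 1
    rw [show ((-z).toNat : ℕ) = (-z).toNat from rfl, mul_pow]
    ring
  · rw [ENNReal.summable.tsum_eq_zero_iff |>.mpr (fun k => by rw [if_neg (by omega), mul_zero])]
    rw [if_neg (by omega)]

lemma Wf_single_zero {u r : ℝ} (hu : 0 ≤ u) (hr : 0 ≤ r) :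
    Wf u (CF.single 0 (ENNReal.ofReal r))
      = ⟨fun z => if z = 0 then ENNReal.ofReal (Real.exp (u*r)) else 0⟩ := by
  ext z
  show ∑' k : ℕ, pc u k * (CF.single 0 (ENNReal.ofReal r) ^ k).f z = _
  have h : ∀ k : ℕ, (CF.single 0 (ENNReal.ofReal r) ^ k).f z
      = if z = 0 then (ENNReal.ofReal r)^k else 0 := by
    intro k; rw [CF.single_pow]; simp
  simp only [h]
  rcases eq_or_ne z 0 with hz | hz
  · subst hz
    simp only [show ((0:ℤ) = 0) = True from by simp, if_true]
    rw [← ofReal_exp_tsum (by positivity : (0:ℝ) ≤ u * r)]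
    refine tsum_congr fun k => ?_
    unfold pc
    rw [← ENNReal.ofReal_pow hr, ← ENNReal.ofReal_mul (by positivity)]
    congr 1
    rw [mul_pow]
    ring
  · simp [hz]

lemma eVp_neg {s : ℝ} {z : ℤ} (hz : z < 0) : eVp s z = 0 := by
  unfold eVp; rw [if_neg (by omega)]

lemma eVp_nonneg' {s : ℝ} {z : ℤ} (hz : 0 ≤ z) :
    eVp s z = ENNReal.ofReal (s ^ z.toNat / z.toNat.factorial) := by
  unfold eVp; rw [if_pos hz]

lemma real_add_pow_div (s s' : ℝ) (n : ℕ) :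
    (s+s')^n / n.factorial
      = ∑ j ∈ Finset.range (n+1), (s^j / j.factorial) * (s'^(n-j)/(n-j).factorial) := by
  rw [add_pow, Finset.sum_div]
  refine Finset.sum_congr rfl fun j hj => ?_
  have hjn : j ≤ n := by simpa using Nat.lt_succ_iff.mp (Finset.mem_range.mp hj)
  have key := choose_div_factorial hjn
  have h1 : (0:ℝ) < j.factorial := by positivity
  have h2 : (0:ℝ) < (n-j).factorial := by positivity
  have h3 : (0:ℝ) < n.factorial := by positivity
  field_simp at key ⊢
  linear_combination (s^j * s'^(n-j)) * key

def VP (s : ℝ) : CF := ⟨eVp s⟩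
def VM (s : ℝ) : CF := ⟨eVm s⟩

lemma VP_mul {s s' : ℝ} (hs : 0 ≤ s) (hs' : 0 ≤ s') : VP s * VP s' = VP (s+s') := by
  ext z
  rw [CF.mul_apply]
  show ∑' w : ℤ, eVp s w * eVp s' (z - w) = eVp (s+s') z
  rcases lt_or_ge z 0 with hz | hz
  · rw [ENNReal.summable.tsum_eq_zero_iff |>.mpr, eVp_neg hz]
    intro w
    rcases lt_or_ge w 0 with hw | hw
    · rw [eVp_neg hw, zero_mul]
    · rw [eVp_neg (show z - w < 0 by omega), mul_zero]
  · rw [tsum_eq_sum (s := Finset.Icc (0:ℤ) z) (fun w hw => by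
      simp only [Finset.mem_Icc, not_and_or, not_le] at hw
      rcases hw with hw | hw
      · rw [eVp_neg hw, zero_mul]
      · rw [eVp_neg (show z - w < 0 by omega), mul_zero])]
    have hterm : ∀ w ∈ Finset.Icc (0:ℤ) z, eVp s w * eVp s' (z - w)
        = ENNReal.ofReal ((s^w.toNat / w.toNat.factorial) * (s'^(z-w).toNat / (z-w).toNat.factorial)) := by
      intro w hw
      simp only [Finset.mem_Icc] at hw
      rw [eVp_nonneg' hw.1, eVp_nonneg' (show (0:ℤ) ≤ z - w by omega),
        ← ENNReal.ofReal_mul (by positivity)]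
    rw [Finset.sum_congr rfl hterm, ← ENNReal.ofReal_sum_of_nonneg (fun w hw => by positivity)]
    rw [eVp_nonneg' hz]
    congr 1
    rw [real_add_pow_div s s' z.toNat]
    refine Finset.sum_nbij' (fun w => w.toNat) (fun j => (j : ℤ)) ?_ ?_ ?_ ?_ ?_ <;>
      intro x hx <;> simp only [Finset.mem_Icc, Finset.mem_range] at hx ⊢
    · omega
    · omega
    · omega
    · omega
    · have h1 : x.toNat ≤ z.toNat := by omega
      have h2 : (z - x).toNat = z.toNat - x.toNat := by omega
      rw [h2]

lemma VM_mul {s s' : ℝ} (hs : 0 ≤ s) (hs' : 0 ≤ s') : VM s * VM s' = VM (s+s') := by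
  ext z
  rw [CF.mul_apply]
  show ∑' w : ℤ, eVm s w * eVm s' (z - w) = eVm (s+s') z
  have h1 : ∑' w : ℤ, eVm s w * eVm s' (z - w) = ∑' w : ℤ, eVp s w * eVp s' ((-z) - w) := by
    rw [← tsum_int_neg (fun w => eVm s w * eVm s' (z - w))]
    refine tsum_congr fun w => ?_
    unfold eVm
    congr 2
    · simp
    · omega
  rw [h1]
  have h2 := congrArg (fun F => F.f (-z)) (VP_mul hs hs')
  simpa only [VP, CF.mul_apply, eVm] using h2

def Pcf (p : ℤ → ℝ) : CF := ⟨fun z => ENNReal.ofReal (p z)⟩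
def La (dp dm : ℝ) (p : ℤ → ℝ) : ℝ := dp * p 1 + dm * p (-1)
def Lb (dp dm : ℝ) (p : ℤ → ℝ) : ℝ := dp * p (-1) + dm * p 1
def eSK (u v : ℝ) : ℤ → ℝ≥0∞ := fun z =>
  ENNReal.ofReal (Real.exp (-(u+v))) * (VP u * VM v).f z
def ePois (d : ℝ) (k : ℕ) : ℝ≥0∞ := ENNReal.ofReal (poisP d k)

lemma flip_prob {p : ℤ → ℝ} (hp : IsProbOn3 p) : IsProbOn3 (flipM p) := by
  obtain ⟨h1, h2, h3⟩ := hp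
  refine ⟨fun z => h1 _, fun z hz => h2 (-z) ?_, by unfold flipM; simp; linarith⟩
  simp only [Set.mem_insert_iff, Set.mem_singleton_iff] at hz ⊢
  omega

lemma Pcf_decomp {p : ℤ → ℝ} (hp : IsProbOn3 p) :
    Pcf p = CF.single 1 (ENNReal.ofReal (p 1)) + (CF.single 0 (ENNReal.ofReal (p 0))
      + CF.single (-1) (ENNReal.ofReal (p (-1)))) := by
  ext z
  rw [CF.add_apply, CF.add_apply]
  simp only [CF.single_apply]
  by_cases h1 : z = 1
  · subst h1; norm_num [Pcf]
  · by_cases h0 : z = 0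
    · subst h0; norm_num [Pcf]
    · by_cases hm : z = -1
      · subst hm; norm_num [Pcf]
      · have : p z = 0 := hp.2.1 z (by simp [h1, h0, hm])
        simp [Pcf, this, h1, h0, hm]

lemma Wf_Pcf {p : ℤ → ℝ} (hp : IsProbOn3 p) {d : ℝ} (hd : 0 ≤ d) :
    Wf d (Pcf p) = CF.single 0 (ENNReal.ofReal (Real.exp (d * p 0)))
      * (VP (d * p 1) * VM (d * p (-1))) := by
  rw [Pcf_decomp hp, Wf_add hd, Wf_add hd]
  rw [Wf_single_one hd (hp.1 1), Wf_single_zero hd (hp.1 0), Wf_single_neg hd (hp.1 (-1))]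
  show VP (d * p 1) * (CF.single 0 _ * VM (d * p (-1))) = _
  ring

theorem eZcf_eq {p : ℤ → ℝ} (hp : IsProbOn3 p) {dp dm : ℝ} (hdp : 0 < dp) (hdm : 0 < dm)
    (z : ℤ) :
    ∑' k : ℕ, ∑' l : ℕ, ePois dp k * ePois dm l * ((Pcf p)^k * (Pcf (flipM p))^l).f z
      = eSK (La dp dm p) (Lb dp dm p) z := by
  have ha := hp.1 1
  have hb := hp.1 0
  have hc := hp.1 (-1)
  have hq := flip_prob hp
  have hePois : ∀ (d : ℝ) (k : ℕ), 0 ≤ d → ePois d k = ENNReal.ofReal (Real.exp (-d)) * pc d k := by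
    intro d k hd
    unfold ePois poisP pc
    rw [← ENNReal.ofReal_mul (by positivity)]
    congr 1
    ring
  calc ∑' k : ℕ, ∑' l : ℕ, ePois dp k * ePois dm l * ((Pcf p)^k * (Pcf (flipM p))^l).f z
      = ENNReal.ofReal (Real.exp (-dp)) * ENNReal.ofReal (Real.exp (-dm)) *
        ∑' (k : ℕ) (l : ℕ), pc dp k * pc dm l * ((Pcf p)^k * (Pcf (flipM p))^l).f z := by
        rw [← ENNReal.tsum_mul_left]
        refine tsum_congr fun k => ?_
        rw [← ENNReal.tsum_mul_left]
        refine tsum_congr fun l => ?_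
        rw [hePois dp k hdp.le, hePois dm l hdm.le]
        ring
    _ = ENNReal.ofReal (Real.exp (-dp)) * ENNReal.ofReal (Real.exp (-dm)) *
        (Wf dp (Pcf p) * Wf dm (Pcf (flipM p))).f z := by
        rw [Wf_mul_apply]
    _ = eSK (La dp dm p) (Lb dp dm p) z := by
        rw [Wf_Pcf hp hdp.le, Wf_Pcf hq hdm.le]
        have hflip1 : flipM p 1 = p (-1) := rfl
        have hflip0 : flipM p 0 = p 0 := rfl
        have hflipm : flipM p (-1) = p 1 := by unfold flipM; norm_num
        rw [hflip1, hflip0, hflipm]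
        have hrearr : CF.single 0 (ENNReal.ofReal (Real.exp (dp * p 0)))
            * (VP (dp * p 1) * VM (dp * p (-1)))
            * (CF.single 0 (ENNReal.ofReal (Real.exp (dm * p 0)))
            * (VP (dm * p (-1)) * VM (dm * p 1)))
            = CF.single 0 (ENNReal.ofReal (Real.exp (dp * p 0)))
              * (CF.single 0 (ENNReal.ofReal (Real.exp (dm * p 0)))
              * ((VP (dp * p 1) * VP (dm * p (-1))) * (VM (dp * p (-1)) * VM (dm * p 1)))) := by
          ring
        rw [hrearr, VP_mul (by positivity) (by positivity), VM_mul (by positivity) (by positivity)]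
        rw [CF.single_mul, CF.single_mul]
        unfold eSK La Lb
        rw [sub_zero, sub_zero]
        rw [← mul_assoc, ← mul_assoc]
        congr 1
        rw [← ENNReal.ofReal_mul (by positivity), ← ENNReal.ofReal_mul (by positivity),
            ← ENNReal.ofReal_mul (by positivity)]
        congr 1
        rw [← Real.exp_add, ← Real.exp_add, ← Real.exp_add]
        congr 1
        have hs := hp.2.2
        nlinarith [hs]
  
/-- classical indicator: `sel P x = x` if `P` holds, else `0`. -/
def sel (P : Prop) (x : ℝ≥0∞) : ℝ≥0∞ := if P then x else 0

lemma sel_pos {P : Prop} (h : P) (x : ℝ≥0∞) : sel P x = x := if_pos h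
lemma sel_neg {P : Prop} (h : ¬ P) (x : ℝ≥0∞) : sel P x = 0 := if_neg h
lemma sel_le_self (P : Prop) (x : ℝ≥0∞) : sel P x ≤ x := by
  unfold sel; split <;> simp
lemma sel_mono {P : Prop} {x y : ℝ≥0∞} (h : x ≤ y) : sel P x ≤ sel P y := by
  unfold sel; split <;> simp [h]
lemma sel_imp {P Q : Prop} (h : P → Q) (x : ℝ≥0∞) : sel P x ≤ sel Q x := by
  unfold sel
  split
  · rw [if_pos (h (by assumption))]
  · simp

lemma poisP_nonneg {d : ℝ} (hd : 0 ≤ d) (k : ℕ) : 0 ≤ poisP d k := by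
  unfold poisP; positivity

lemma ePois_eq {d : ℝ} (k : ℕ) :
    ePois d k = ENNReal.ofReal (Real.exp (-d)) * ENNReal.ofReal (d ^ k / k.factorial) := by
  unfold ePois poisP
  rw [← ENNReal.ofReal_mul (by positivity)]
  congr 1
  ring

lemma ePois_mass {d : ℝ} (hd : 0 ≤ d) : ∑' k, ePois d k = 1 := by
  simp only [ePois_eq]
  rw [ENNReal.tsum_mul_left, ofReal_exp_tsum hd, ← ENNReal.ofReal_mul (by positivity),
    ← Real.exp_add]
  norm_num

lemma ePois_mgf {d s : ℝ} (hd : 0 ≤ d) (hs : 0 ≤ s) :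
    ∑' k, ePois d k * ENNReal.ofReal (s^k) = ENNReal.ofReal (Real.exp (d*s - d)) := by
  have h : ∀ k : ℕ, ePois d k * ENNReal.ofReal (s^k)
      = ENNReal.ofReal (Real.exp (-d)) * ENNReal.ofReal ((d*s) ^ k / k.factorial) := by
    intro k
    rw [ePois_eq, mul_assoc, ← ENNReal.ofReal_mul (by positivity)]
    congr 2
    rw [mul_pow]
    ring
  simp only [h]
  rw [ENNReal.tsum_mul_left, ofReal_exp_tsum (by positivity), ← ENNReal.ofReal_mul (by positivity),
    ← Real.exp_add]
  congr 1
  ring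

lemma ePois_succ_le {d : ℝ} (hd : 0 ≤ d) (j : ℕ) :
    ePois d (j+1) ≤ ENNReal.ofReal d * ePois d j := by
  unfold ePois poisP
  rw [← ENNReal.ofReal_mul hd]
  apply ENNReal.ofReal_le_ofReal
  rw [div_le_iff₀ (by positivity), Nat.factorial_succ]
  have h1 : Real.exp (-d) * d ^ (j+1) = (Real.exp (-d) * d ^ j) * d := by ring
  have h2 : (0:ℝ) ≤ Real.exp (-d) * d ^ j := by positivity
  push_cast
  rw [h1]
  calc Real.exp (-d) * d ^ j * d = (Real.exp (-d) * d ^ j / j.factorial) * d * j.factorial := by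
        field_simp
    _ ≤ d * (Real.exp (-d) * d ^ j / ↑j.factorial) * ((↑j + 1) * ↑j.factorial) := by
        have hf : (0:ℝ) ≤ Real.exp (-d) * d ^ j / j.factorial := by positivity
        have : (j.factorial:ℝ) ≤ (↑j + 1) * ↑j.factorial := by
          nlinarith [Nat.cast_nonneg (α := ℝ) j.factorial, Nat.cast_nonneg (α := ℝ) j]
        nlinarith [mul_nonneg hf hd]

lemma tsum_nat_shift_one (f : ℕ → ℝ≥0∞) :
    ∑' k, sel (1 ≤ k) (f k) = ∑' j, f (j + 1) := by
  have h := Function.Injective.tsum_eq (f := fun k => sel (1 ≤ k) (f k))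
    (g := fun j : ℕ => j + 1) (fun a b hab => by simpa using hab) ?_
  · rw [← h]
    exact tsum_congr fun j => sel_pos (by omega) _
  · intro x hx
    rcases Nat.eq_zero_or_pos x with h0 | h0
    · subst h0
      simp only [Function.mem_support, sel_neg (by omega : ¬ (1 ≤ 0))] at hx
      exact absurd rfl hx
    · exact ⟨x - 1, show x - 1 + 1 = x by omega⟩

lemma ePois_head {d : ℝ} (hd : 0 ≤ d) :
    ∑' k, sel (1 ≤ k) (ePois d k) ≤ ENNReal.ofReal d := by
  rw [tsum_nat_shift_one]
  calc ∑' j, ePois d (j+1) ≤ ∑' j, ENNReal.ofReal d * ePois d j :=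
        ENNReal.tsum_le_tsum fun j => ePois_succ_le hd j
    _ = ENNReal.ofReal d * ∑' j, ePois d j := ENNReal.tsum_mul_left
    _ = ENNReal.ofReal d := by rw [ePois_mass hd, mul_one]

lemma ePois_mgf_head {d s : ℝ} (hd : 0 ≤ d) (hs : 0 ≤ s) :
    ∑' k, sel (1 ≤ k) (ePois d k * ENNReal.ofReal (s^k))
      ≤ ENNReal.ofReal (d * s * Real.exp (d*s)) := by
  rw [tsum_nat_shift_one]
  have hterm : ∀ j : ℕ, ePois d (j+1) * ENNReal.ofReal (s^(j+1))
      ≤ ENNReal.ofReal (d * s) * (ePois d j * ENNReal.ofReal (s^j)) := by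
    intro j
    have h1 : ENNReal.ofReal (s^(j+1)) = ENNReal.ofReal s * ENNReal.ofReal (s^j) := by
      rw [← ENNReal.ofReal_mul hs, pow_succ]
      congr 1
      ring
    rw [h1, ← mul_assoc]
    have h2 : ePois d (j+1) * ENNReal.ofReal s ≤ ENNReal.ofReal d * ePois d j * ENNReal.ofReal s :=
      mul_le_mul_left (ePois_succ_le hd j) _
    refine (mul_le_mul_left h2 _).trans (le_of_eq ?_)
    rw [show ENNReal.ofReal (d * s) = ENNReal.ofReal d * ENNReal.ofReal s from
      ENNReal.ofReal_mul hd]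
    ring
  calc ∑' j, ePois d (j+1) * ENNReal.ofReal (s^(j+1))
      ≤ ∑' j, ENNReal.ofReal (d * s) * (ePois d j * ENNReal.ofReal (s^j)) :=
        ENNReal.tsum_le_tsum hterm
    _ = ENNReal.ofReal (d * s) * ENNReal.ofReal (Real.exp (d * s - d)) := by
        rw [ENNReal.tsum_mul_left, ePois_mgf hd hs]
    _ ≤ ENNReal.ofReal (d * s * Real.exp (d*s)) := by
        rw [← ENNReal.ofReal_mul (by positivity)]
        apply ENNReal.ofReal_le_ofReal
        have := Real.exp_le_exp.mpr (show d*s - d ≤ d*s by linarith)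
        nlinarith [Real.exp_pos (d*s - d), mul_nonneg hd hs]

lemma eSK_double {u v : ℝ} (hu : 0 ≤ u) (hv : 0 ≤ v) (z : ℤ) :
    eSK u v z = ∑' (x : ℕ) (y : ℕ), sel ((x:ℤ) - y = z) (ePois u x * ePois v y) := by
  unfold eSK
  rw [CF.mul_apply]
  show ENNReal.ofReal (Real.exp (-(u+v))) * ∑' w : ℤ, eVp u w * eVm v (z - w) = _
  rw [tsum_int_nonneg (fun w => eVp u w * eVm v (z - w))
    (fun w hw => by simp only [eVp_neg hw, zero_mul]), ← ENNReal.tsum_mul_left]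
  refine tsum_congr fun x => ?_
  rcases le_or_gt 0 ((x:ℤ) - z) with hxz | hxz
  · rw [tsum_eq_single ((x:ℤ) - z).toNat (fun y hy => sel_neg (by omega) _)]
    rw [sel_pos (by omega)]
    unfold eVm
    rw [eVp_nonneg' (show (0:ℤ) ≤ x by positivity), eVp_nonneg' (show (0:ℤ) ≤ -(z - x) by omega)]
    rw [ePois_eq, ePois_eq]
    rw [show (-(z-(x:ℤ))).toNat = ((x:ℤ) - z).toNat by omega,
        show ((x:ℤ)).toNat = x by omega]
    rw [show Real.exp (-(u+v)) = Real.exp (-u) * Real.exp (-v) by rw [← Real.exp_add]; ring_nf]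
    rw [ENNReal.ofReal_mul (by positivity)]
    ring
  · rw [ENNReal.summable.tsum_eq_zero_iff |>.mpr (fun y => sel_neg (by omega) _)]
    unfold eVm
    rw [show eVp v (-(z - (x:ℤ))) = 0 from eVp_neg (by omega), mul_zero, mul_zero]

lemma collapse_z {c : ℝ≥0∞} (x y : ℕ) :
    (∑' z : ℤ, sel ((x:ℤ) - y = z) c) = c := by
  rw [tsum_eq_single ((x:ℤ) - y) (fun z hz => sel_neg (Ne.symm hz) _)]
  rw [sel_pos rfl]

lemma eSK_mass {u v : ℝ} (hu : 0 ≤ u) (hv : 0 ≤ v) : ∑' z : ℤ, eSK u v z = 1 := by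
  simp only [eSK_double hu hv]
  rw [ENNReal.tsum_comm (f := fun (z : ℤ) (x : ℕ) => _)]
  have h1 : ∀ x : ℕ, (∑' (z : ℤ) (y : ℕ), sel ((x:ℤ) - y = z) (ePois u x * ePois v y))
      = ePois u x := by
    intro x
    rw [ENNReal.tsum_comm]
    have : ∀ y : ℕ, (∑' z : ℤ, sel ((x:ℤ) - y = z) (ePois u x * ePois v y))
        = ePois u x * ePois v y := fun y => collapse_z x y
    rw [tsum_congr this, ENNReal.tsum_mul_left, ePois_mass hv, mul_one]
  rw [tsum_congr h1, ePois_mass hu]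

lemma eSK_le_one {u v : ℝ} (hu : 0 ≤ u) (hv : 0 ≤ v) (z : ℤ) : eSK u v z ≤ 1 := by
  rw [← eSK_mass hu hv]
  exact ENNReal.le_tsum z

lemma eSK_tail_le_one {u v : ℝ} (hu : 0 ≤ u) (hv : 0 ≤ v) (A : ℤ → Prop) :
    (∑' z : ℤ, sel (A z) (eSK u v z)) ≤ 1 := by
  rw [← eSK_mass hu hv]
  exact ENNReal.tsum_le_tsum fun z => sel_le_self _ _

lemma eSK_conv {u v u' v' : ℝ} (hu : 0 ≤ u) (hv : 0 ≤ v) (hu' : 0 ≤ u') (hv' : 0 ≤ v')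
    (z : ℤ) :
    eSK (u+u') (v+v') z = ∑' d : ℤ, eSK u' v' d * eSK u v (z - d) := by
  have hcollect : ∀ d : ℤ, eSK u' v' d * eSK u v (z - d)
      = (ENNReal.ofReal (Real.exp (-(u'+v'))) * ENNReal.ofReal (Real.exp (-(u+v)))) *
        ((VP u' * VM v').f d * (VP u * VM v).f (z - d)) := by
    intro d
    unfold eSK
    ring
  rw [tsum_congr hcollect, ENNReal.tsum_mul_left]
  have h2 : ∑' d : ℤ, (VP u' * VM v').f d * (VP u * VM v).f (z - d)
      = ((VP u' * VM v') * (VP u * VM v)).f z := (CF.mul_apply _ _ z).symm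
  rw [h2]
  have h3 : (VP u' * VM v') * (VP u * VM v) = VP (u + u') * VM (v + v') := by
    have : (VP u' * VM v') * (VP u * VM v) = (VP u' * VP u) * (VM v' * VM v) := by ring
    rw [this, VP_mul hu' hu, VM_mul hv' hv, show u' + u = u + u' by ring,
      show v' + v = v + v' by ring]
  rw [h3]
  unfold eSK
  rw [← ENNReal.ofReal_mul (by positivity), ← Real.exp_add]
  congr 2
  ring

/-- double-sum representation of restricted tails -/
lemma tail_double {u v : ℝ} (hu : 0 ≤ u) (hv : 0 ≤ v) (A : ℤ → Prop) :
    (∑' z : ℤ, sel (A z) (eSK u v z))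
      = ∑' (x : ℕ) (y : ℕ), sel (A ((x:ℤ) - y)) (ePois u x * ePois v y) := by
  calc (∑' z : ℤ, sel (A z) (eSK u v z))
      = ∑' (z : ℤ) (x : ℕ) (y : ℕ),
          sel (A z) (sel ((x:ℤ) - y = z) (ePois u x * ePois v y)) := by
        refine tsum_congr fun z => ?_
        rw [eSK_double hu hv]
        rcases Classical.em (A z) with h | h
        · rw [sel_pos h]
          exact tsum_congr fun x => tsum_congr fun y => (sel_pos h _).symm
        · rw [sel_neg h]
          symm
          rw [ENNReal.summable.tsum_eq_zero_iff]
          intro x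
          rw [ENNReal.summable.tsum_eq_zero_iff]
          intro y
          exact sel_neg h _
    _ = ∑' (x : ℕ) (z : ℤ) (y : ℕ),
          sel (A z) (sel ((x:ℤ) - y = z) (ePois u x * ePois v y)) := ENNReal.tsum_comm
    _ = ∑' (x : ℕ) (y : ℕ) (z : ℤ),
          sel (A z) (sel ((x:ℤ) - y = z) (ePois u x * ePois v y)) :=
        tsum_congr fun x => ENNReal.tsum_comm
    _ = ∑' (x : ℕ) (y : ℕ), sel (A ((x:ℤ) - y)) (ePois u x * ePois v y) := by
        refine tsum_congr fun x => tsum_congr fun y => ?_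
        rw [tsum_eq_single ((x:ℤ) - y) (fun z hz => by
          rw [sel_neg (Ne.symm hz) _]
          unfold sel
          split <;> rfl)]
        rcases Classical.em (A ((x:ℤ) - y)) with h | h
        · rw [sel_pos h, sel_pos h, sel_pos rfl]
        · rw [sel_neg h, sel_neg h]

lemma zpow_ofReal_ge_one {t : ℝ} (ht : 1 ≤ t) {k : ℤ} (hk : 0 ≤ k) : (1:ℝ) ≤ t ^ k := by
  rw [show k = (k.toNat : ℤ) by omega, zpow_natCast]
  exact one_le_pow₀ ht

/-- Chernoff bound for the lower tail. -/
lemma tlow_le {u v t : ℝ} (hu : 0 ≤ u) (hv : 0 ≤ v) (ht : 1 ≤ t) (m : ℤ) :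
    (∑' z : ℤ, sel (z ≤ m) (eSK u v z))
      ≤ ENNReal.ofReal (t ^ m * Real.exp ((u/t - u) + (v*t - v))) := by
  have ht0 : (0:ℝ) < t := by linarith
  rw [tail_double hu hv (fun z => z ≤ m)]
  have hterm : ∀ (x y : ℕ), sel ((x:ℤ) - y ≤ m) (ePois u x * ePois v y)
      ≤ ENNReal.ofReal (t ^ m) * ((ePois u x * ENNReal.ofReal ((1/t)^x))
        * (ePois v y * ENNReal.ofReal (t^y))) := by
    intro x y
    rcases Classical.em ((x:ℤ) - y ≤ m) with hc | hc
    · rw [sel_pos hc]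
      have hpow : t ^ m * ((1/t)^x * t^y) = t ^ (m - x + y) := by
        rw [one_div, inv_pow, ← zpow_natCast t x, ← zpow_natCast t y, ← zpow_neg,
          ← zpow_add₀ ht0.ne', ← zpow_add₀ ht0.ne']
        congr 1
        omega
      have h1 : (1:ℝ) ≤ t ^ m * ((1/t)^x * t^y) := by
        rw [hpow]
        exact zpow_ofReal_ge_one ht (by omega)
      calc ePois u x * ePois v y
          = (ePois u x * ePois v y) * 1 := by rw [mul_one]
        _ ≤ (ePois u x * ePois v y) * ENNReal.ofReal (t ^ m * ((1/t)^x * t^y)) := by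
            refine mul_le_mul_right ?_ _
            rw [show (1:ℝ≥0∞) = ENNReal.ofReal 1 by simp]
            exact ENNReal.ofReal_le_ofReal h1
        _ = ENNReal.ofReal (t ^ m) * ((ePois u x * ENNReal.ofReal ((1/t)^x))
            * (ePois v y * ENNReal.ofReal (t^y))) := by
            rw [ENNReal.ofReal_mul (by positivity), ENNReal.ofReal_mul (by positivity)]
            ring
    · rw [sel_neg hc]
      exact zero_le
  calc ∑' (x : ℕ) (y : ℕ), sel ((x:ℤ) - y ≤ m) (ePois u x * ePois v y)
      ≤ ∑' (x : ℕ) (y : ℕ), ENNReal.ofReal (t ^ m) * ((ePois u x * ENNReal.ofReal ((1/t)^x))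
          * (ePois v y * ENNReal.ofReal (t^y))) :=
        ENNReal.tsum_le_tsum fun x => ENNReal.tsum_le_tsum fun y => hterm x y
    _ = ∑' (x : ℕ), (ENNReal.ofReal (t ^ m) * (ePois u x * ENNReal.ofReal ((1/t)^x)))
          * (∑' y : ℕ, ePois v y * ENNReal.ofReal (t^y)) := by
        refine tsum_congr fun x => ?_
        rw [← ENNReal.tsum_mul_left]
        exact tsum_congr fun y => by ring
    _ = ENNReal.ofReal (t ^ m) * ((∑' x : ℕ, ePois u x * ENNReal.ofReal ((1/t)^x))
          * (∑' y : ℕ, ePois v y * ENNReal.ofReal (t^y))) := by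
        rw [ENNReal.tsum_mul_right, ENNReal.tsum_mul_left]
        ring
    _ = ENNReal.ofReal (t ^ m) * (ENNReal.ofReal (Real.exp (u * (1/t) - u))
          * ENNReal.ofReal (Real.exp (v * t - v))) := by
        rw [ePois_mgf hu (by positivity), ePois_mgf hv (by linarith)]
    _ ≤ ENNReal.ofReal (t ^ m * Real.exp ((u/t - u) + (v*t - v))) := by
        rw [← ENNReal.ofReal_mul (by positivity), ← ENNReal.ofReal_mul (by positivity)]
        apply ENNReal.ofReal_le_ofReal
        rw [← Real.exp_add, mul_one_div]

/-- mass above `1` is at most `u` -/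
lemma head_plus_le {u v : ℝ} (hu : 0 ≤ u) (hv : 0 ≤ v) :
    (∑' d : ℤ, sel (1 ≤ d) (eSK u v d)) ≤ ENNReal.ofReal u := by
  rw [tail_double hu hv (fun z => 1 ≤ z)]
  have hterm : ∀ (x y : ℕ), sel (1 ≤ (x:ℤ) - y) (ePois u x * ePois v y)
      ≤ sel (1 ≤ x) (ePois u x) * ePois v y := by
    intro x y
    rcases Classical.em (1 ≤ (x:ℤ) - y) with hc | hc
    · rw [sel_pos hc, sel_pos (by omega)]
    · rw [sel_neg hc]
      exact zero_le
  calc ∑' (x : ℕ) (y : ℕ), sel (1 ≤ (x:ℤ) - y) (ePois u x * ePois v y)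
      ≤ ∑' (x : ℕ) (y : ℕ), sel (1 ≤ x) (ePois u x) * ePois v y :=
        ENNReal.tsum_le_tsum fun x => ENNReal.tsum_le_tsum fun y => hterm x y
    _ = (∑' x : ℕ, sel (1 ≤ x) (ePois u x)) * ∑' y, ePois v y := by
        rw [← ENNReal.tsum_mul_right]
        exact tsum_congr fun x => ENNReal.tsum_mul_left
    _ ≤ ENNReal.ofReal u := by
        rw [ePois_mass hv, mul_one]
        exact ePois_head hu

/-- weighted mass below `-1` -/
lemma head_minus_le {u v t : ℝ} (hu : 0 ≤ u) (hv : 0 ≤ v) (ht : 1 ≤ t) :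
    (∑' d : ℤ, sel (d ≤ -1) (eSK u v d * ENNReal.ofReal (t ^ (-d))))
      ≤ ENNReal.ofReal (v * t * Real.exp (v * t)) := by
  have ht0 : (0:ℝ) < t := by linarith
  have hsplit : ∀ d : ℤ, sel (d ≤ -1) (eSK u v d * ENNReal.ofReal (t ^ (-d)))
      = ∑' (x : ℕ) (y : ℕ), sel ((x:ℤ) - y = d ∧ d ≤ -1)
          (ePois u x * ePois v y * ENNReal.ofReal (t ^ (-d))) := by
    intro d
    rcases Classical.em (d ≤ -1) with hd | hd
    · rw [sel_pos hd, eSK_double hu hv, ← ENNReal.tsum_mul_right]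
      refine tsum_congr fun x => ?_
      rw [← ENNReal.tsum_mul_right]
      refine tsum_congr fun y => ?_
      rcases Classical.em ((x:ℤ) - y = d) with h1 | h1
      · rw [sel_pos h1, sel_pos ⟨h1, hd⟩]
      · rw [sel_neg h1, sel_neg (fun hc => h1 hc.1), zero_mul]
    · rw [sel_neg hd]
      symm
      rw [ENNReal.summable.tsum_eq_zero_iff]
      intro x
      rw [ENNReal.summable.tsum_eq_zero_iff]
      intro y
      exact sel_neg (fun hc => hd hc.2) _
  rw [tsum_congr hsplit, ENNReal.tsum_comm (f := fun (d : ℤ) (x : ℕ) => _)]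
  have hinner : ∀ x : ℕ, (∑' (d : ℤ) (y : ℕ), sel ((x:ℤ) - y = d ∧ d ≤ -1)
      (ePois u x * ePois v y * ENNReal.ofReal (t ^ (-d))))
      ≤ ePois u x * ∑' (y : ℕ), sel (1 ≤ y) (ePois v y * ENNReal.ofReal (t^y)) := by
    intro x
    rw [ENNReal.tsum_comm, ← ENNReal.tsum_mul_left]
    refine ENNReal.tsum_le_tsum fun y => ?_
    rw [tsum_eq_single ((x:ℤ) - y) (fun d hd => sel_neg (fun hc => hd hc.1.symm) _)]
    rcases Classical.em ((x:ℤ) - y = (x:ℤ) - y ∧ (x:ℤ) - y ≤ -1) with hc | hc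
    · rw [sel_pos hc, sel_pos (show 1 ≤ y by omega)]
      have hle : t ^ (-((x:ℤ) - y)) ≤ t ^ (y:ℕ) := by
        rw [← zpow_natCast t y]
        have h2 : t ^ (-((x:ℤ) - y)) * t ^ ((x:ℤ)) = t ^ ((y:ℤ)) := by
          rw [← zpow_add₀ ht0.ne']
          congr 1
          omega
        have h3 : (1:ℝ) ≤ t ^ ((x:ℤ)) := zpow_ofReal_ge_one ht (by positivity)
        nlinarith [zpow_pos ht0 (-((x:ℤ) - y)), zpow_pos ht0 ((y:ℤ))]
      calc ePois u x * ePois v y * ENNReal.ofReal (t ^ (-((x:ℤ) - y)))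
          ≤ ePois u x * ePois v y * ENNReal.ofReal (t ^ (y:ℕ)) :=
            mul_le_mul_right (ENNReal.ofReal_le_ofReal hle) _
        _ = ePois u x * (ePois v y * ENNReal.ofReal (t^(y:ℕ))) := by ring
    · rw [sel_neg hc]
      exact zero_le
  calc (∑' (x : ℕ) (d : ℤ) (y : ℕ), sel ((x:ℤ) - y = d ∧ d ≤ -1)
        (ePois u x * ePois v y * ENNReal.ofReal (t ^ (-d))))
      ≤ ∑' x : ℕ, ePois u x * ∑' (y : ℕ), sel (1 ≤ y) (ePois v y * ENNReal.ofReal (t^y)) :=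
        ENNReal.tsum_le_tsum hinner
    _ = (∑' x : ℕ, ePois u x) * ∑' (y : ℕ), sel (1 ≤ y) (ePois v y * ENNReal.ofReal (t^y)) :=
        ENNReal.tsum_mul_right
    _ ≤ 1 * ENNReal.ofReal (v * t * Real.exp (v * t)) := by
        rw [ePois_mass hu]
        exact mul_le_mul_right (ePois_mgf_head hv ht0.le) _
    _ = ENNReal.ofReal (v * t * Real.exp (v * t)) := one_mul _

/-- splitting a sum over ℤ into `≤ -1`, `0`, `≥ 1` parts -/
lemma tsum_int_split3 (F : ℤ → ℝ≥0∞) :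
    ∑' z : ℤ, F z = (∑' z : ℤ, sel (z ≤ -1) (F z)) + F 0
      + ∑' z : ℤ, sel (1 ≤ z) (F z) := by
  have h : ∀ z : ℤ, F z = sel (z ≤ -1) (F z) + sel (z = 0) (F z) + sel (1 ≤ z) (F z) := by
    intro z
    rcases lt_trichotomy z 0 with hz | hz | hz
    · rw [sel_pos (by omega), sel_neg (by omega), sel_neg (by omega), add_zero, add_zero]
    · subst hz
      rw [sel_neg (by omega), sel_pos rfl, sel_neg (by omega), zero_add, add_zero]
    · rw [sel_neg (by omega), sel_neg (by omega), sel_pos (by omega), zero_add, zero_add]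
  rw [tsum_congr h, ENNReal.tsum_add, ENNReal.tsum_add,
    tsum_eq_single 0 (fun z hz => sel_neg hz _), sel_pos rfl]

/-! ### Transfer from the real definitions to `eSK` -/

lemma convZ_nonneg {f g : ℤ → ℝ} (hf : ∀ z, 0 ≤ f z) (hg : ∀ z, 0 ≤ g z) (z : ℤ) :
    0 ≤ convZ f g z :=
  tsum_nonneg fun w => mul_nonneg (hf w) (hg _)

lemma convPow_zero (a : ℤ → ℝ) : convPow a 0 = fun z => if z = 0 then 1 else 0 := rfl
lemma convPow_succ (a : ℤ → ℝ) (n : ℕ) : convPow a (n+1) = convZ (convPow a n) a := rfl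

lemma convPow_nonneg {p : ℤ → ℝ} (hp : ∀ z, 0 ≤ p z) : ∀ (k : ℕ) (z : ℤ), 0 ≤ convPow p k z := by
  intro k
  induction k with
  | zero =>
    intro z
    rw [convPow_zero]
    dsimp only
    split <;> norm_num
  | succ n ih =>
    intro z
    rw [convPow_succ]
    exact convZ_nonneg ih hp z

lemma conv3 {f q : ℤ → ℝ} (hq : ∀ w : ℤ, w ∉ ({-1, 0, 1} : Set ℤ) → q w = 0) (z : ℤ) :
    convZ f q z = f (z-1) * q 1 + f z * q 0 + f (z+1) * q (-1) := by
  unfold convZ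
  rw [tsum_eq_sum (s := ({z-1, z, z+1} : Finset ℤ)) (fun w hw => by
    simp only [Finset.mem_insert, Finset.mem_singleton] at hw
    push_neg at hw
    rw [hq (z - w) (by
      simp only [Set.mem_insert_iff, Set.mem_singleton_iff]
      push_neg
      refine ⟨by omega, by omega, by omega⟩), mul_zero])]
  rw [Finset.sum_insert (by simp only [Finset.mem_insert, Finset.mem_singleton]; omega),
      Finset.sum_insert (by simp only [Finset.mem_singleton]; omega),
      Finset.sum_singleton]
  rw [show z - (z - 1) = 1 from by ring, sub_self, show z - (z + 1) = -1 from by ring]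
  ring

open ENNReal in
lemma emul3 (F Q : CF) (hq : ∀ w : ℤ, w ∉ ({-1, 0, 1} : Set ℤ) → Q.f w = 0) (z : ℤ) :
    (F * Q).f z = F.f (z-1) * Q.f 1 + F.f z * Q.f 0 + F.f (z+1) * Q.f (-1) := by
  rw [CF.mul_apply]
  rw [tsum_eq_sum (s := ({z-1, z, z+1} : Finset ℤ)) (fun w hw => by
    simp only [Finset.mem_insert, Finset.mem_singleton] at hw
    push_neg at hw
    rw [hq (z - w) (by
      simp only [Set.mem_insert_iff, Set.mem_singleton_iff]
      push_neg
      refine ⟨by omega, by omega, by omega⟩), mul_zero])]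
  rw [Finset.sum_insert (by simp only [Finset.mem_insert, Finset.mem_singleton]; omega),
      Finset.sum_insert (by simp only [Finset.mem_singleton]; omega),
      Finset.sum_singleton]
  rw [show z - (z - 1) = 1 from by ring, sub_self, show z - (z + 1) = -1 from by ring]
  ring

lemma Pcf_supp {p : ℤ → ℝ} (hp : IsProbOn3 p) :
    ∀ w : ℤ, w ∉ ({-1, 0, 1} : Set ℤ) → (Pcf p).f w = 0 := by
  intro w hw
  show ENNReal.ofReal (p w) = 0
  rw [hp.2.1 w hw]
  simp

lemma ofReal_convPow {p : ℤ → ℝ} (hp : IsProbOn3 p) :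
    ∀ (k : ℕ) (z : ℤ), ENNReal.ofReal (convPow p k z) = ((Pcf p)^k).f z := by
  intro k
  induction k with
  | zero =>
    intro z
    rw [convPow_zero, pow_zero]
    dsimp only
    rw [CF.one_apply]
    split <;> simp
  | succ n ih =>
    intro z
    rw [convPow_succ, conv3 hp.2.1 z, pow_succ, emul3 ((Pcf p)^n) (Pcf p) (Pcf_supp hp) z]
    have hnn := convPow_nonneg hp.1 n
    have h1 : (0:ℝ) ≤ convPow p n (z-1) * p 1 := mul_nonneg (hnn _) (hp.1 _)
    have h2 : (0:ℝ) ≤ convPow p n z * p 0 := mul_nonneg (hnn _) (hp.1 _)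
    have h3 : (0:ℝ) ≤ convPow p n (z+1) * p (-1) := mul_nonneg (hnn _) (hp.1 _)
    rw [ENNReal.ofReal_add (add_nonneg h1 h2) h3, ENNReal.ofReal_add h1 h2]
    rw [ENNReal.ofReal_mul (hnn _), ENNReal.ofReal_mul (hnn _), ENNReal.ofReal_mul (hnn _)]
    rw [ih (z-1), ih z, ih (z+1)]
    rfl

lemma Pcf_mass {p : ℤ → ℝ} (hp : IsProbOn3 p) : CF.mass (Pcf p) = 1 := by
  unfold CF.mass
  rw [tsum_eq_sum (s := ({-1, 0, 1} : Finset ℤ)) (fun w hw => by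
    show ENNReal.ofReal (p w) = 0
    rw [hp.2.1 w (by
      simp only [Finset.mem_insert, Finset.mem_singleton] at hw
      simp only [Set.mem_insert_iff, Set.mem_singleton_iff]
      push_neg at hw ⊢
      exact hw), ENNReal.ofReal_zero])]
  rw [Finset.sum_insert (by decide), Finset.sum_insert (by decide), Finset.sum_singleton]
  show ENNReal.ofReal (p (-1)) + (ENNReal.ofReal (p 0) + ENNReal.ofReal (p 1)) = 1
  rw [← ENNReal.ofReal_add (hp.1 0) (hp.1 1),
      ← ENNReal.ofReal_add (hp.1 (-1)) (add_nonneg (hp.1 0) (hp.1 1))]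
  rw [← add_assoc, hp.2.2]
  simp

lemma PQ_le_one {p : ℤ → ℝ} (hp : IsProbOn3 p) (k l : ℕ) (z : ℤ) :
    ((Pcf p)^k * (Pcf (flipM p))^l).f z ≤ 1 := by
  refine (CF.apply_le_mass _ z).trans ?_
  rw [CF.mass_mul, CF.mass_pow, CF.mass_pow, Pcf_mass hp, Pcf_mass (flip_prob hp)]
  simp

lemma La_nonneg {p : ℤ → ℝ} (hp : IsProbOn3 p) {dp dm : ℝ} (hdp : 0 ≤ dp) (hdm : 0 ≤ dm) :
    0 ≤ La dp dm p := by
  have := hp.1 1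
  have := hp.1 (-1)
  unfold La
  positivity

lemma Lb_nonneg {p : ℤ → ℝ} (hp : IsProbOn3 p) {dp dm : ℝ} (hdp : 0 ≤ dp) (hdm : 0 ≤ dm) :
    0 ≤ Lb dp dm p := by
  have := hp.1 1
  have := hp.1 (-1)
  unfold Lb
  positivity

open ENNReal in
lemma convPow_support {p : ℤ → ℝ} (hsupp : ∀ w : ℤ, w ∉ ({-1, 0, 1} : Set ℤ) → p w = 0) :
    ∀ (k : ℕ) (z : ℤ), (z < -(k:ℤ) ∨ (k:ℤ) < z) → convPow p k z = 0 := by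
  intro k
  induction k with
  | zero =>
    intro z hz
    rw [convPow_zero]
    dsimp only
    rw [if_neg (by omega)]
  | succ n ih =>
    intro z hz
    rw [convPow_succ, conv3 hsupp z, ih (z-1) (by push_cast; omega), ih z (by push_cast; omega),
      ih (z+1) (by push_cast; omega)]
    ring

open ENNReal in
lemma ofReal_convZ_pow {p : ℤ → ℝ} (hp : IsProbOn3 p) (k l : ℕ) (z : ℤ) :
    ENNReal.ofReal (convZ (convPow p k) (convPow (flipM p) l) z)
      = ((Pcf p)^k * (Pcf (flipM p))^l).f z := by
  have hq := flip_prob hp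
  have hside : ∀ w : ℤ, w ∉ Finset.Icc (-(k:ℤ)) k →
      convPow p k w * convPow (flipM p) l (z - w) = 0 := by
    intro w hw
    simp only [Finset.mem_Icc] at hw
    rw [convPow_support hp.2.1 k w (by omega), zero_mul]
  have hsideE : ∀ w : ℤ, w ∉ Finset.Icc (-(k:ℤ)) k →
      ((Pcf p)^k).f w * ((Pcf (flipM p))^l).f (z - w) = 0 := by
    intro w hw
    simp only [Finset.mem_Icc] at hw
    rw [← ofReal_convPow hp, convPow_support hp.2.1 k w (by omega), ENNReal.ofReal_zero, zero_mul]
  rw [CF.mul_apply, tsum_eq_sum hsideE]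
  unfold convZ
  rw [tsum_eq_sum hside, ENNReal.ofReal_sum_of_nonneg (fun w hw =>
    mul_nonneg (convPow_nonneg hp.1 k w) (convPow_nonneg hq.1 l _))]
  refine Finset.sum_congr rfl fun w hw => ?_
  rw [ENNReal.ofReal_mul (convPow_nonneg hp.1 k w), ofReal_convPow hp, ofReal_convPow hq]

open ENNReal in
lemma Zdist_eq {p : ℤ → ℝ} (hp : IsProbOn3 p) {dp dm : ℝ} (hdp : 0 < dp) (hdm : 0 < dm)
    (z : ℤ) :
    Zdist dp dm p z = (eSK (La dp dm p) (Lb dp dm p) z).toReal := by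
  have hq := flip_prob hp
  have hLa := La_nonneg hp hdp.le hdm.le
  have hLb := Lb_nonneg hp hdp.le hdm.le
  set H : ℕ → ℕ → ℝ≥0∞ :=
    fun k l => ePois dp k * ePois dm l * ((Pcf p)^k * (Pcf (flipM p))^l).f z with hH
  have hofR : ∀ k l, poisP dp k * poisP dm l * convZ (convPow p k) (convPow (flipM p) l) z
      = (H k l).toReal := by
    intro k l
    rw [hH]
    dsimp only
    rw [← ofReal_convZ_pow hp k l z]
    rw [show ePois dp k = ENNReal.ofReal (poisP dp k) from rfl,
        show ePois dm l = ENNReal.ofReal (poisP dm l) from rfl]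
    rw [← ENNReal.ofReal_mul (poisP_nonneg hdp.le k),
        ← ENNReal.ofReal_mul (mul_nonneg (poisP_nonneg hdp.le k) (poisP_nonneg hdm.le l))]
    rw [ENNReal.toReal_ofReal (by
      have h1 := convZ_nonneg (convPow_nonneg hp.1 k) (convPow_nonneg hq.1 l) z
      have h2 := poisP_nonneg hdp.le k
      have h3 := poisP_nonneg hdm.le l
      positivity)]
  have hfin_l : ∀ k, (∑' l, H k l) ≠ ⊤ := by
    intro k
    have hb : (∑' l, H k l) ≤ ∑' l : ℕ, ePois dp k * ePois dm l := by
      refine ENNReal.tsum_le_tsum fun l => ?_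
      rw [hH]
      dsimp only
      calc ePois dp k * ePois dm l * ((Pcf p)^k * (Pcf (flipM p))^l).f z
          ≤ ePois dp k * ePois dm l * 1 := mul_le_mul_right (PQ_le_one hp k l z) _
        _ = ePois dp k * ePois dm l := mul_one _
    have : (∑' l : ℕ, ePois dp k * ePois dm l) = ePois dp k := by
      rw [ENNReal.tsum_mul_left, ePois_mass hdm.le, mul_one]
    rw [this] at hb
    exact ne_top_of_le_ne_top ENNReal.ofReal_ne_top hb
  have hkey : (∑' k, ∑' l, H k l) = eSK (La dp dm p) (Lb dp dm p) z := eZcf_eq hp hdp hdm z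
  have hfin : (∑' k, ∑' l, H k l) ≠ ⊤ := by
    rw [hkey]
    exact ne_top_of_le_ne_top ENNReal.one_ne_top (eSK_le_one hLa hLb z)
  calc Zdist dp dm p z = ∑' k, ∑' l, (H k l).toReal := by
        unfold Zdist
        exact tsum_congr fun k => tsum_congr fun l => hofR k l
    _ = ∑' k, (∑' l, H k l).toReal := tsum_congr fun k => (toReal_tsum _ (hfin_l k)).symm
    _ = (∑' k, ∑' l, H k l).toReal := (toReal_tsum _ hfin).symm
    _ = (eSK (La dp dm p) (Lb dp dm p) z).toReal := by rw [hkey]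

open ENNReal in
lemma tsum_tail_pos (F : ℤ → ℝ≥0∞) : ∑' m : ℕ, F (1 + (m:ℤ)) = ∑' z : ℤ, sel (1 ≤ z) (F z) := by
  have h := Function.Injective.tsum_eq (f := fun z : ℤ => sel (1 ≤ z) (F z))
    (g := fun m : ℕ => 1 + (m:ℤ)) (fun a b hab => by simp at hab; exact_mod_cast hab) ?_
  · rw [← h]
    exact tsum_congr fun m => (sel_pos (show (1:ℤ) ≤ 1 + (m:ℤ) by omega) _).symm
  · intro z hz
    simp only [Function.mem_support] at hz
    have h1 : 1 ≤ z := by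
      by_contra hc
      exact hz (sel_neg hc _)
    exact ⟨(z - 1).toNat, show (1:ℤ) + (((z - 1).toNat : ℕ) : ℤ) = z by omega⟩

open ENNReal in
lemma tsum_tail_neg (F : ℤ → ℝ≥0∞) :
    ∑' m : ℕ, F (-1 - (m:ℤ)) = ∑' z : ℤ, sel (z ≤ -1) (F z) := by
  have h := Function.Injective.tsum_eq (f := fun z : ℤ => sel (z ≤ -1) (F z))
    (g := fun m : ℕ => -1 - (m:ℤ)) (fun a b hab => by simp at hab; exact_mod_cast hab) ?_
  · rw [← h]
    exact tsum_congr fun m => (sel_pos (show (-1:ℤ) - (m:ℤ) ≤ -1 by omega) _).symm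
  · intro z hz
    simp only [Function.mem_support] at hz
    have h1 : z ≤ -1 := by
      by_contra hc
      exact hz (sel_neg hc _)
    exact ⟨(-1 - z).toNat, show (-1:ℤ) - (((-1 - z).toNat : ℕ) : ℤ) = z by omega⟩

open ENNReal in
lemma Twp_one {p : ℤ → ℝ} (hp : IsProbOn3 p) {dp dm : ℝ} (hdp : 0 < dp) (hdm : 0 < dm) :
    Twp dp dm p 1 = (∑' z : ℤ, sel (1 ≤ z) (eSK (La dp dm p) (Lb dp dm p) z)).toReal := by
  have hLa := La_nonneg hp hdp.le hdm.le
  have hLb := Lb_nonneg hp hdp.le hdm.le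
  show (if (1:ℤ) = 1 then ∑' m : ℕ, Zdist dp dm p (1 + (m:ℤ)) else _) = _
  rw [if_pos rfl]
  have h1 : ∀ m : ℕ, Zdist dp dm p (1 + (m:ℤ))
      = (eSK (La dp dm p) (Lb dp dm p) (1 + (m:ℤ))).toReal := fun m => Zdist_eq hp hdp hdm _
  rw [tsum_congr h1]
  have hre : (∑' m : ℕ, eSK (La dp dm p) (Lb dp dm p) (1 + (m:ℤ)))
      = ∑' z : ℤ, sel (1 ≤ z) (eSK (La dp dm p) (Lb dp dm p) z) :=
    tsum_tail_pos _
  have hfin : (∑' m : ℕ, eSK (La dp dm p) (Lb dp dm p) (1 + (m:ℤ))) ≠ ⊤ := by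
    rw [hre]
    exact ne_top_of_le_ne_top ENNReal.one_ne_top (eSK_tail_le_one hLa hLb _)
  rw [← toReal_tsum _ hfin, hre]

open ENNReal in
lemma Twp_negone {p : ℤ → ℝ} (hp : IsProbOn3 p) {dp dm : ℝ} (hdp : 0 < dp) (hdm : 0 < dm) :
    Twp dp dm p (-1) = (∑' z : ℤ, sel (z ≤ -1) (eSK (La dp dm p) (Lb dp dm p) z)).toReal := by
  have hLa := La_nonneg hp hdp.le hdm.le
  have hLb := Lb_nonneg hp hdp.le hdm.le
  show (if (-1:ℤ) = 1 then _ else if (-1:ℤ) = 0 then _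
    else if (-1:ℤ) = -1 then ∑' m : ℕ, Zdist dp dm p (-1 - (m:ℤ)) else _) = _
  rw [if_neg (by decide), if_neg (by decide), if_pos rfl]
  have h1 : ∀ m : ℕ, Zdist dp dm p (-1 - (m:ℤ))
      = (eSK (La dp dm p) (Lb dp dm p) (-1 - (m:ℤ))).toReal := fun m => Zdist_eq hp hdp hdm _
  rw [tsum_congr h1]
  have hre : (∑' m : ℕ, eSK (La dp dm p) (Lb dp dm p) (-1 - (m:ℤ)))
      = ∑' z : ℤ, sel (z ≤ -1) (eSK (La dp dm p) (Lb dp dm p) z) :=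
    tsum_tail_neg _
  have hfin : (∑' m : ℕ, eSK (La dp dm p) (Lb dp dm p) (-1 - (m:ℤ))) ≠ ⊤ := by
    rw [hre]
    exact ne_top_of_le_ne_top ENNReal.one_ne_top (eSK_tail_le_one hLa hLb _)
  rw [← toReal_tsum _ hfin, hre]

open ENNReal in
lemma Twp_zero {p : ℤ → ℝ} (hp : IsProbOn3 p) {dp dm : ℝ} (hdp : 0 < dp) (hdm : 0 < dm) :
    Twp dp dm p 0 = (eSK (La dp dm p) (Lb dp dm p) 0).toReal := by
  show (if (0:ℤ) = 1 then _ else if (0:ℤ) = 0 then Zdist dp dm p 0 else _) = _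
  rw [if_neg (by decide), if_pos rfl]
  exact Zdist_eq hp hdp hdm 0

lemma Twp_other (dp dm : ℝ) (p : ℤ → ℝ) {z : ℤ} (h1 : z ≠ 1) (h0 : z ≠ 0) (hm : z ≠ -1) :
    Twp dp dm p z = 0 := by
  show (if z = 1 then _ else if z = 0 then _ else if z = -1 then _ else 0) = 0
  rw [if_neg h1, if_neg h0, if_neg hm]

/-! ### Numeric Chernoff estimates -/

def tC (dp dm : ℝ) : ℝ := Real.sqrt (dp / max dm 1)
def tauB (dp : ℝ) : ℝ := Real.exp 3 * (dp ^ 16)⁻¹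

lemma log_le_sqrt {dp : ℝ} (hdp : 1 ≤ dp) : Real.log dp ≤ 2 * Real.sqrt dp := by
  have h0 : (0:ℝ) < dp := by linarith
  have h1 : Real.log (Real.sqrt dp) = Real.log dp / 2 := Real.log_sqrt h0.le
  have h2 : Real.log (Real.sqrt dp) ≤ Real.sqrt dp - 1 :=
    Real.log_le_sub_one_of_pos (Real.sqrt_pos.mpr h0)
  have h3 : (0:ℝ) ≤ Real.sqrt dp := Real.sqrt_nonneg _
  linarith [h1 ▸ h2]

lemma t_ge_one {dp dm : ℝ} (hdm : 0 < dm) (hmd : dm < dp) (hdp1 : 1 ≤ dp) :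
    1 ≤ tC dp dm := by
  have hm : max dm 1 ≤ dp := max_le hmd.le hdp1
  have hm0 : (0:ℝ) < max dm 1 := lt_of_lt_of_le one_pos (le_max_right _ _)
  have : (1:ℝ) ≤ dp / max dm 1 := (one_le_div hm0).mpr hm
  calc (1:ℝ) = Real.sqrt 1 := Real.sqrt_one.symm
    _ ≤ Real.sqrt (dp / max dm 1) := Real.sqrt_le_sqrt this
    _ = tC dp dm := rfl

lemma t_le_sqrt {dp dm : ℝ} (hdm : 0 < dm) (hdp0 : 0 < dp) : tC dp dm ≤ Real.sqrt dp := by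
  apply Real.sqrt_le_sqrt
  have hm1 : (1:ℝ) ≤ max dm 1 := le_max_right _ _
  rw [div_le_iff₀ (by linarith)]
  nlinarith

lemma t_le_dp {dp dm : ℝ} (hdm : 0 < dm) (hdp1 : 1 ≤ dp) : tC dp dm ≤ dp := by
  refine (t_le_sqrt hdm (by linarith)).trans ?_
  nlinarith [Real.sq_sqrt (show (0:ℝ) ≤ dp by linarith), Real.sqrt_nonneg dp,
    Real.sqrt_le_sqrt (show (1:ℝ) ≤ dp from hdp1), Real.sqrt_one]

/-- The core exponent estimate. -/
lemma exponent_le {dp dm : ℝ} (hdm : 0 < dm) (hmd : dm < dp) (hD : 100000 ≤ dp)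
    (hgap : 8 * Real.sqrt (dp * Real.log dp) ≤ dp - dm)
    {u v : ℝ} (hu : dp - 1 ≤ u) (hv : v ≤ dm + (dp ^ 9)⁻¹) :
    u * (1 / tC dp dm - 1) + v * (tC dp dm - 1) ≤ -(16 * Real.log dp) + 3 := by
  have hdp1 : (1:ℝ) ≤ dp := by linarith
  have hdp0 : (0:ℝ) < dp := by linarith
  set m := max dm 1 with hm
  have hm1 : (1:ℝ) ≤ m := le_max_right _ _
  have hm0 : (0:ℝ) < m := by linarith
  have hmdp : m ≤ dp := max_le hmd.le hdp1
  set t := tC dp dm with htdef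
  have ht1 : 1 ≤ t := t_ge_one hdm hmd hdp1
  have ht0 : 0 < t := by linarith
  have htsq : t ≤ Real.sqrt dp := t_le_sqrt hdm hdp0
  have hsqdp : Real.sqrt dp * Real.sqrt dp = dp := Real.mul_self_sqrt hdp0.le
  have hsqm : Real.sqrt m * Real.sqrt m = m := Real.mul_self_sqrt hm0.le
  have hsm0 : 0 < Real.sqrt m := Real.sqrt_pos.mpr hm0
  have hsd0 : 0 < Real.sqrt dp := Real.sqrt_pos.mpr hdp0
  have htval : t = Real.sqrt dp / Real.sqrt m := by
    rw [htdef]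
    unfold tC
    rw [← hm, Real.sqrt_div hdp0.le]
  have key1 : dp / t = Real.sqrt dp * Real.sqrt m := by
    rw [htval, div_div_eq_mul_div, div_eq_iff hsd0.ne']
    nlinarith
  have key2 : m * t = Real.sqrt dp * Real.sqrt m := by
    rw [htval]
    field_simp
    nlinarith
  -- slop bound
  have hs : (dp ^ 9)⁻¹ * t ≤ 1 := by
    have h1 : (dp ^ 9)⁻¹ ≤ dp⁻¹ := by
      apply inv_anti₀ hdp0
      calc dp = dp ^ 1 := (pow_one dp).symm
        _ ≤ dp ^ 9 := pow_le_pow_right₀ hdp1 (by norm_num)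
    have h2 : t ≤ dp := t_le_dp hdm hdp1
    calc (dp ^ 9)⁻¹ * t ≤ dp⁻¹ * dp := by
          apply mul_le_mul h1 h2 ht0.le (by positivity)
      _ = 1 := inv_mul_cancel₀ hdp0.ne'
  have hstep1 : u * (1 / t - 1) ≤ (dp - 1) * (1 / t - 1) := by
    apply mul_le_mul_of_nonpos_right hu
    have : 1 / t ≤ 1 := by
      rw [div_le_one ht0]
      exact ht1
    linarith
  have hstep2 : v * (t - 1) ≤ (dm + (dp ^ 9)⁻¹) * (t - 1) :=
    mul_le_mul_of_nonneg_right hv (by linarith)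
  have hE : u * (1 / t - 1) + v * (t - 1)
      ≤ dp / t + dm * t - dp - dm + 2 := by
    have e1 : (dp - 1) * (1 / t - 1) = dp / t - dp - 1 / t + 1 := by
      field_simp
      ring
    have e2 : (dm + (dp ^ 9)⁻¹) * (t - 1) = dm * t - dm + (dp ^ 9)⁻¹ * t - (dp ^ 9)⁻¹ := by
      ring
    have e3 : 0 < 1 / t := by positivity
    have e4 : (0:ℝ) ≤ (dp ^ 9)⁻¹ := by positivity
    linarith
  have hmt : dm * t ≤ m * t := mul_le_mul_of_nonneg_right (le_max_left _ _) ht0.le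
  have hEE : u * (1 / t - 1) + v * (t - 1)
      ≤ 2 * (Real.sqrt dp * Real.sqrt m) - dp - dm + 2 := by
    have := key1
    have := key2
    linarith
  have hlog0 : 0 ≤ Real.log dp := Real.log_nonneg hdp1
  rcases le_or_gt dm 1 with hcase | hcase
  · -- m = 1
    have hmeq : m = 1 := max_eq_right hcase
    rw [hmeq] at hEE
    rw [Real.sqrt_one, mul_one] at hEE
    have h34 : (34:ℝ) ≤ Real.sqrt dp := by
      rw [show (34:ℝ) = Real.sqrt 1156 by
        rw [show (1156:ℝ) = 34 ^ 2 by norm_num, Real.sqrt_sq (by norm_num)]]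
      exact Real.sqrt_le_sqrt (by linarith)
    have hlog : 16 * Real.log dp ≤ 32 * Real.sqrt dp := by
      have := log_le_sqrt hdp1
      linarith
    nlinarith [hsqdp]
  · -- m = dm
    have hmeq : m = dm := max_eq_left hcase.le
    have hsqdm : Real.sqrt m * Real.sqrt m = dm := by rw [hmeq] at hsqm ⊢; exact hsqm
    have hdmsq : Real.sqrt dm ≤ Real.sqrt dp := Real.sqrt_le_sqrt hmd.le
    have hgap2 : 8 * (Real.sqrt dp * Real.sqrt (Real.log dp)) ≤ dp - dm := by
      rw [← Real.sqrt_mul hdp0.le]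
      exact hgap
    have hglog : Real.sqrt (Real.log dp) * Real.sqrt (Real.log dp) = Real.log dp :=
      Real.mul_self_sqrt hlog0
    have hdiff : (Real.sqrt dp - Real.sqrt m) * (Real.sqrt dp + Real.sqrt m) = dp - dm := by
      nlinarith
    have hsum : Real.sqrt dp + Real.sqrt m ≤ 2 * Real.sqrt dp := by
      rw [hmeq]
      linarith
    have hg0 : 0 ≤ Real.sqrt (Real.log dp) := Real.sqrt_nonneg _
    have hged : 4 * Real.sqrt (Real.log dp) ≤ Real.sqrt dp - Real.sqrt m := by
      nlinarith [hsm0.le]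
    have hsq16 : 16 * Real.log dp ≤ (Real.sqrt dp - Real.sqrt m) ^ 2 := by
      nlinarith
    nlinarith [hsq16, hsqdp, hsqdm]


open ENNReal in
lemma exp_exponent_le {dp dm : ℝ} (hdm : 0 < dm) (hmd : dm < dp) (hD : 100000 ≤ dp)
    (hgap : 8 * Real.sqrt (dp * Real.log dp) ≤ dp - dm)
    {u v : ℝ} (hu : dp - 1 ≤ u) (hv : v ≤ dm + (dp ^ 9)⁻¹) :
    Real.exp (u / tC dp dm - u + (v * tC dp dm - v)) ≤ tauB dp := by
  have hdp0 : (0:ℝ) < dp := by linarith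
  have harg : u / tC dp dm - u + (v * tC dp dm - v)
      = u * (1 / tC dp dm - 1) + v * (tC dp dm - 1) := by ring
  rw [harg]
  calc Real.exp (u * (1 / tC dp dm - 1) + v * (tC dp dm - 1))
      ≤ Real.exp (-(16 * Real.log dp) + 3) :=
        Real.exp_le_exp.mpr (exponent_le hdm hmd hD hgap hu hv)
    _ = tauB dp := by
        rw [Real.exp_add, Real.exp_neg]
        rw [show (16:ℝ) * Real.log dp = ((16:ℕ):ℝ) * Real.log dp by norm_num]
        rw [Real.exp_nat_mul, Real.exp_log hdp0]
        unfold tauB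
        ring

open ENNReal in
lemma tail_bound {dp dm : ℝ} (hdm : 0 < dm) (hmd : dm < dp) (hD : 100000 ≤ dp)
    (hgap : 8 * Real.sqrt (dp * Real.log dp) ≤ dp - dm)
    {u v : ℝ} (hu0 : 0 ≤ u) (hv0 : 0 ≤ v) (hu : dp - 1 ≤ u) (hv : v ≤ dm + (dp ^ 9)⁻¹)
    (m : ℤ) :
    (∑' z : ℤ, sel (z ≤ m) (eSK u v z)) ≤ ENNReal.ofReal ((tC dp dm) ^ m * tauB dp) := by
  have ht1 := t_ge_one hdm hmd (by linarith)
  have ht0 : (0:ℝ) < tC dp dm := by linarith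
  refine (tlow_le hu0 hv0 ht1 m).trans (ENNReal.ofReal_le_ofReal ?_)
  exact mul_le_mul_of_nonneg_left (exp_exponent_le hdm hmd hD hgap hu hv) (zpow_nonneg ht0.le m)

open ENNReal in
lemma tail0_bound {dp dm : ℝ} (hdm : 0 < dm) (hmd : dm < dp) (hD : 100000 ≤ dp)
    (hgap : 8 * Real.sqrt (dp * Real.log dp) ≤ dp - dm)
    {u v : ℝ} (hu0 : 0 ≤ u) (hv0 : 0 ≤ v) (hu : dp - 1 ≤ u) (hv : v ≤ dm + (dp ^ 9)⁻¹) :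
    (∑' z : ℤ, sel (z ≤ 0) (eSK u v z)) ≤ ENNReal.ofReal (tauB dp) := by
  have := tail_bound hdm hmd hD hgap hu0 hv0 hu hv 0
  rwa [zpow_zero, one_mul] at this

lemma exp3_le : Real.exp 3 ≤ 21 := by
  have h1 : Real.exp 1 ≤ 2.7182818286 := Real.exp_one_lt_d9.le
  have h3 : Real.exp 3 = Real.exp 1 ^ 3 := by
    rw [show (3:ℝ) = ((3:ℕ):ℝ) * 1 by norm_num, Real.exp_nat_mul]
  rw [h3]
  have h0 : (0:ℝ) < Real.exp 1 := Real.exp_pos 1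
  have h2 : Real.exp 1 ^ 3 ≤ 2.7182818286 ^ 3 := by
    apply pow_le_pow_left₀ h0.le h1
  nlinarith [h2]

lemma tauB_le {dp : ℝ} (hD : 100000 ≤ dp) : tauB dp ≤ (dp ^ 10)⁻¹ := by
  have hdp1 : (1:ℝ) ≤ dp := by linarith
  have hdp0 : (0:ℝ) < dp := by linarith
  have h6 : (21:ℝ) ≤ dp ^ 6 := by
    calc (21:ℝ) ≤ dp := by linarith
      _ = dp ^ 1 := (pow_one dp).symm
      _ ≤ dp ^ 6 := pow_le_pow_right₀ hdp1 (by norm_num)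
  have h16 : dp ^ 16 = dp ^ 10 * dp ^ 6 := by ring
  unfold tauB
  rw [h16, mul_inv]
  have h1 : Real.exp 3 * ((dp ^ 10)⁻¹ * (dp ^ 6)⁻¹) = (Real.exp 3 * (dp ^ 6)⁻¹) * (dp ^ 10)⁻¹ := by
    ring
  rw [h1]
  have h2 : Real.exp 3 * (dp ^ 6)⁻¹ ≤ 1 := by
    rw [← div_eq_mul_inv, div_le_one (by positivity)]
    linarith [exp3_le]
  nlinarith [inv_nonneg.mpr (le_of_lt (pow_pos hdp0 10)), h2]

/-! ### Properties of the operator on skewed probabilities -/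

lemma skew_bounds {dp : ℝ} {p : ℤ → ℝ} (hp : IsProbOn3 p) (hs : Skewed dp p)
    (hdp1 : 1 ≤ dp) :
    p (-1) ≤ (dp ^ 10)⁻¹ ∧ p 0 ≤ (dp ^ 10)⁻¹ ∧ p 1 ≤ 1 := by
  have h1 := hp.1 1
  have hm := hp.1 (-1)
  have h0 := hp.1 0
  have hsum := hp.2.2
  have hsk : 1 - (dp ^ 10)⁻¹ ≤ p 1 := hs
  exact ⟨by linarith, by linarith, by linarith⟩

lemma dpeps {dp : ℝ} (hdp0 : 0 < dp) : dp * (dp ^ 10)⁻¹ = (dp ^ 9)⁻¹ := by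
  rw [show dp ^ 10 = dp * dp ^ 9 by ring, mul_inv, ← mul_assoc,
    mul_inv_cancel₀ hdp0.ne', one_mul]

lemma La_ge {dp dm : ℝ} {p : ℤ → ℝ} (hp : IsProbOn3 p) (hs : Skewed dp p)
    (hdp1 : 1 ≤ dp) (hdm0 : 0 ≤ dm) : dp - 1 ≤ La dp dm p := by
  have hdp0 : (0:ℝ) < dp := by linarith
  have hsk : 1 - (dp ^ 10)⁻¹ ≤ p 1 := hs
  have hm := hp.1 (-1)
  have heps : dp * (dp ^ 10)⁻¹ = (dp ^ 9)⁻¹ := dpeps hdp0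
  have h9 : (dp ^ 9)⁻¹ ≤ 1 := by
    have h : (1:ℝ) ≤ dp ^ 9 := one_le_pow₀ hdp1
    have h0 : (0:ℝ) < dp ^ 9 := by positivity
    rw [inv_le_one₀ h0]
    exact h
  have hla : dp * (1 - (dp ^ 10)⁻¹) ≤ La dp dm p := by
    unfold La
    nlinarith [mul_nonneg hdm0 hm]
  nlinarith

lemma Lb_le {dp dm : ℝ} {p : ℤ → ℝ} (hp : IsProbOn3 p) (hs : Skewed dp p)
    (hdp1 : 1 ≤ dp) (hdm0 : 0 ≤ dm) : Lb dp dm p ≤ dm + (dp ^ 9)⁻¹ := by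
  have hdp0 : (0:ℝ) < dp := by linarith
  obtain ⟨hc, hb, ha⟩ := skew_bounds hp hs hdp1
  have heps : dp * (dp ^ 10)⁻¹ = (dp ^ 9)⁻¹ := dpeps hdp0
  unfold Lb
  have h1 : dp * p (-1) ≤ (dp ^ 9)⁻¹ := by
    calc dp * p (-1) ≤ dp * (dp ^ 10)⁻¹ := by
          apply mul_le_mul_of_nonneg_left hc (by linarith)
      _ = (dp ^ 9)⁻¹ := heps
  have h2 : dm * p 1 ≤ dm := by nlinarith [hp.1 1]
  linarith

open ENNReal in
lemma tsum_int_split2 (F : ℤ → ℝ≥0∞) :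
    ∑' z : ℤ, F z = (∑' z : ℤ, sel (z ≤ 0) (F z)) + ∑' z : ℤ, sel (1 ≤ z) (F z) := by
  have h : ∀ z : ℤ, F z = sel (z ≤ 0) (F z) + sel (1 ≤ z) (F z) := by
    intro z
    rcases le_or_gt z 0 with hz | hz
    · rw [sel_pos hz, sel_neg (by omega), add_zero]
    · rw [sel_neg (by omega), sel_pos (by omega), zero_add]
  rw [tsum_congr h, ENNReal.tsum_add]

open ENNReal in
lemma T_prob {dp dm : ℝ} (hdp : 0 < dp) (hdm : 0 < dm) {p : ℤ → ℝ} (hp : IsProbOn3 p) :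
    IsProbOn3 (Twp dp dm p) := by
  have hLa := La_nonneg hp hdp.le hdm.le
  have hLb := Lb_nonneg hp hdp.le hdm.le
  have hf1 : (∑' z : ℤ, sel (z ≤ -1) (eSK (La dp dm p) (Lb dp dm p) z)) ≠ ⊤ :=
    ne_top_of_le_ne_top ENNReal.one_ne_top (eSK_tail_le_one hLa hLb _)
  have hf2 : eSK (La dp dm p) (Lb dp dm p) 0 ≠ ⊤ :=
    ne_top_of_le_ne_top ENNReal.one_ne_top (eSK_le_one hLa hLb 0)
  have hf3 : (∑' z : ℤ, sel (1 ≤ z) (eSK (La dp dm p) (Lb dp dm p) z)) ≠ ⊤ :=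
    ne_top_of_le_ne_top ENNReal.one_ne_top (eSK_tail_le_one hLa hLb _)
  refine ⟨?_, ?_, ?_⟩
  · intro z
    by_cases h1 : z = 1
    · subst h1; rw [Twp_one hp hdp hdm]; exact ENNReal.toReal_nonneg
    by_cases h0 : z = 0
    · subst h0; rw [Twp_zero hp hdp hdm]; exact ENNReal.toReal_nonneg
    by_cases hm : z = -1
    · subst hm; rw [Twp_negone hp hdp hdm]; exact ENNReal.toReal_nonneg
    rw [Twp_other dp dm p h1 h0 hm]
  · intro z hz
    simp only [Set.mem_insert_iff, Set.mem_singleton_iff] at hz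
    push_neg at hz
    exact Twp_other dp dm p hz.2.2 hz.2.1 hz.1
  · rw [Twp_one hp hdp hdm, Twp_zero hp hdp hdm, Twp_negone hp hdp hdm]
    rw [← ENNReal.toReal_add hf1 hf2, ← ENNReal.toReal_add (by
      exact ENNReal.add_ne_top.mpr ⟨hf1, hf2⟩) hf3]
    rw [← tsum_int_split3, eSK_mass hLa hLb]
    simp

open ENNReal in
lemma T_skew {dp dm : ℝ} (hdm : 0 < dm) (hmd : dm < dp) (hD : 100000 ≤ dp)
    (hgap : 8 * Real.sqrt (dp * Real.log dp) ≤ dp - dm)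
    {p : ℤ → ℝ} (hp : IsProbOn3 p) (hs : Skewed dp p) : Skewed dp (Twp dp dm p) := by
  have hdp : (0:ℝ) < dp := by linarith
  have hdp1 : (1:ℝ) ≤ dp := by linarith
  have hLa := La_nonneg hp hdp.le hdm.le
  have hLb := Lb_nonneg hp hdp.le hdm.le
  have hf1 : (∑' z : ℤ, sel (z ≤ 0) (eSK (La dp dm p) (Lb dp dm p) z)) ≠ ⊤ :=
    ne_top_of_le_ne_top ENNReal.one_ne_top (eSK_tail_le_one hLa hLb _)
  have hf3 : (∑' z : ℤ, sel (1 ≤ z) (eSK (La dp dm p) (Lb dp dm p) z)) ≠ ⊤ :=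
    ne_top_of_le_ne_top ENNReal.one_ne_top (eSK_tail_le_one hLa hLb _)
  have hsplit : (1:ℝ) = (∑' z : ℤ, sel (z ≤ 0) (eSK (La dp dm p) (Lb dp dm p) z)).toReal
      + (∑' z : ℤ, sel (1 ≤ z) (eSK (La dp dm p) (Lb dp dm p) z)).toReal := by
    rw [← ENNReal.toReal_add hf1 hf3, ← tsum_int_split2, eSK_mass hLa hLb]
    simp
  have htail : (∑' z : ℤ, sel (z ≤ 0) (eSK (La dp dm p) (Lb dp dm p) z)).toReal
      ≤ (dp ^ 10)⁻¹ := by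
    have hb := tail0_bound hdm hmd hD hgap hLa hLb
      (La_ge hp hs hdp1 hdm.le) (Lb_le hp hs hdp1 hdm.le)
    have := ENNReal.toReal_le_of_le_ofReal (by
      have := Real.exp_pos 3
      have : 0 < tauB dp := by unfold tauB; positivity
      linarith) hb
    exact this.trans (tauB_le hD)
  show 1 - (dp ^ 10)⁻¹ ≤ Twp dp dm p 1
  rw [Twp_one hp hdp hdm]
  linarith

/-! ### sel lemmas for the contraction argument -/

open ENNReal in
lemma sel_mul_left {P : Prop} (a b : ℝ≥0∞) : sel P (a * b) = a * sel P b := by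
  unfold sel; split <;> simp

open ENNReal in
lemma sel_mul_right {P : Prop} (a b : ℝ≥0∞) : sel P (a * b) = sel P a * b := by
  unfold sel; split <;> simp

open ENNReal in
lemma sel_and {P Q : Prop} (a b : ℝ≥0∞) : sel (P ∧ Q) (a * b) = sel P a * sel Q b := by
  unfold sel
  rcases Classical.em P with hP | hP <;> rcases Classical.em Q with hQ | hQ <;>
    simp [hP, hQ]

open ENNReal in
lemma sel_split3 {P Q R S : Prop} (h : P → Q ∨ R ∨ S) (x : ℝ≥0∞) :
    sel P x ≤ sel Q x + sel R x + sel S x := by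
  rcases Classical.em P with hP | hP
  · rw [sel_pos hP]
    rcases h hP with hQ | hR | hS
    · rw [sel_pos hQ]; exact le_add_of_le_of_nonneg (le_add_of_le_of_nonneg le_rfl (zero_le)) (zero_le)
    · rw [sel_pos hR]; exact le_add_of_le_of_nonneg (le_add_of_nonneg_of_le (zero_le) le_rfl) (zero_le)
    · rw [sel_pos hS]; exact le_add_of_nonneg_of_le (zero_le) le_rfl
  · rw [sel_neg hP]
    exact zero_le

open ENNReal in
lemma sel_mono' {P : Prop} {x y : ℝ≥0∞} (h : P → x ≤ y) : sel P x ≤ sel P y := by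
  rcases Classical.em P with hP | hP
  · rw [sel_pos hP, sel_pos hP]; exact h hP
  · rw [sel_neg hP, sel_neg hP]

open ENNReal in
lemma sel_tsum {P : Prop} {ι : Type} (f : ι → ℝ≥0∞) :
    sel P (∑' i, f i) = ∑' i, sel P (f i) := by
  rcases Classical.em P with hP | hP
  · rw [sel_pos hP]; exact tsum_congr fun i => (sel_pos hP _).symm
  · rw [sel_neg hP]
    symm
    rw [ENNReal.summable.tsum_eq_zero_iff]
    exact fun i => sel_neg hP _

/-! ### The contraction estimate -/

open ENNReal in
lemma G_expand {u0 v0 du dv : ℝ} (hu0 : 0 ≤ u0) (hv0 : 0 ≤ v0) (hdu : 0 ≤ du) (hdv : 0 ≤ dv)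
    (A : ℤ → Prop) :
    (∑' z : ℤ, sel (A z) (eSK (u0+du) (v0+dv) z))
      = ∑' (d : ℤ) (w : ℤ), sel (A (d + w)) (eSK du dv d * eSK u0 v0 w) := by
  calc (∑' z : ℤ, sel (A z) (eSK (u0+du) (v0+dv) z))
      = ∑' (z : ℤ) (d : ℤ), sel (A z) (eSK du dv d * eSK u0 v0 (z - d)) := by
        refine tsum_congr fun z => ?_
        rw [eSK_conv hu0 hv0 hdu hdv z, sel_tsum]
    _ = ∑' (d : ℤ) (z : ℤ), sel (A z) (eSK du dv d * eSK u0 v0 (z - d)) := ENNReal.tsum_comm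
    _ = ∑' (d : ℤ) (w : ℤ), sel (A (d + w)) (eSK du dv d * eSK u0 v0 w) := by
        refine tsum_congr fun d => ?_
        rw [← tsum_int_shift d (fun z => sel (A z) (eSK du dv d * eSK u0 v0 (z - d)))]
        refine tsum_congr fun w => ?_
        rw [add_sub_cancel_left]

open ENNReal in
lemma GW_expand {u0 v0 du dv : ℝ} (hu0 : 0 ≤ u0) (hv0 : 0 ≤ v0) (hdu : 0 ≤ du) (hdv : 0 ≤ dv)
    (A : ℤ → Prop) :
    (∑' w : ℤ, sel (A w) (eSK u0 v0 w))
      = ∑' (d : ℤ) (w : ℤ), sel (A w) (eSK du dv d * eSK u0 v0 w) := by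
  symm
  calc ∑' (d : ℤ) (w : ℤ), sel (A w) (eSK du dv d * eSK u0 v0 w)
      = ∑' (d : ℤ), eSK du dv d * ∑' (w : ℤ), sel (A w) (eSK u0 v0 w) := by
        refine tsum_congr fun d => ?_
        rw [← ENNReal.tsum_mul_left]
        exact tsum_congr fun w => sel_mul_left _ _
    _ = (∑' d : ℤ, eSK du dv d) * ∑' (w : ℤ), sel (A w) (eSK u0 v0 w) := ENNReal.tsum_mul_right
    _ = ∑' (w : ℤ), sel (A w) (eSK u0 v0 w) := by rw [eSK_mass hdu hdv, one_mul]

open ENNReal in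
lemma double_err_bound {u0 v0 du dv : ℝ}
    (hu0 : 0 ≤ u0) (hv0 : 0 ≤ v0) (hdu : 0 ≤ du) (hdv : 0 ≤ dv)
    {P : ℤ → ℤ → Prop} {Q : ℤ → ℤ → Prop}
    (h : ∀ d w : ℤ, P d w → Q d w ∨ (1 ≤ d ∧ w ≤ 0) ∨ (d ≤ -1 ∧ w ≤ -d)) :
    (∑' (d : ℤ) (w : ℤ), sel (P d w) (eSK du dv d * eSK u0 v0 w))
      ≤ (∑' (d : ℤ) (w : ℤ), sel (Q d w) (eSK du dv d * eSK u0 v0 w))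
        + (∑' d : ℤ, sel (1 ≤ d) (eSK du dv d)) * (∑' w : ℤ, sel (w ≤ 0) (eSK u0 v0 w))
        + ∑' d : ℤ, sel (d ≤ -1) (eSK du dv d * ∑' w : ℤ, sel (w ≤ -d) (eSK u0 v0 w)) := by
  have hterm : ∀ d w : ℤ, sel (P d w) (eSK du dv d * eSK u0 v0 w)
      ≤ sel (Q d w) (eSK du dv d * eSK u0 v0 w)
        + sel (1 ≤ d) (eSK du dv d) * sel (w ≤ 0) (eSK u0 v0 w)
        + sel (d ≤ -1) (eSK du dv d) * sel (w ≤ -d) (eSK u0 v0 w) := by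
    intro d w
    have := sel_split3 (h d w) (eSK du dv d * eSK u0 v0 w)
    rwa [sel_and, sel_and] at this
  calc (∑' (d : ℤ) (w : ℤ), sel (P d w) (eSK du dv d * eSK u0 v0 w))
      ≤ ∑' (d : ℤ) (w : ℤ), (sel (Q d w) (eSK du dv d * eSK u0 v0 w)
          + sel (1 ≤ d) (eSK du dv d) * sel (w ≤ 0) (eSK u0 v0 w)
          + sel (d ≤ -1) (eSK du dv d) * sel (w ≤ -d) (eSK u0 v0 w)) :=
        ENNReal.tsum_le_tsum fun d => ENNReal.tsum_le_tsum fun w => hterm d w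
    _ = (∑' (d : ℤ) (w : ℤ), sel (Q d w) (eSK du dv d * eSK u0 v0 w))
          + (∑' (d : ℤ) (w : ℤ), sel (1 ≤ d) (eSK du dv d) * sel (w ≤ 0) (eSK u0 v0 w))
          + ∑' (d : ℤ) (w : ℤ), sel (d ≤ -1) (eSK du dv d) * sel (w ≤ -d) (eSK u0 v0 w) := by
        rw [← ENNReal.tsum_add, ← ENNReal.tsum_add]
        refine tsum_congr fun d => ?_
        rw [← ENNReal.tsum_add, ← ENNReal.tsum_add]
    _ = (∑' (d : ℤ) (w : ℤ), sel (Q d w) (eSK du dv d * eSK u0 v0 w))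
        + (∑' d : ℤ, sel (1 ≤ d) (eSK du dv d)) * (∑' w : ℤ, sel (w ≤ 0) (eSK u0 v0 w))
        + ∑' d : ℤ, sel (d ≤ -1) (eSK du dv d * ∑' w : ℤ, sel (w ≤ -d) (eSK u0 v0 w)) := by
        congr 1
        · congr 1
          rw [← ENNReal.tsum_mul_right]
          refine tsum_congr fun d => ?_
          rw [ENNReal.tsum_mul_left]
        · refine tsum_congr fun d => ?_
          rcases Classical.em (d ≤ -1) with hd | hd
          · have hL : (∑' w : ℤ, sel (d ≤ -1) (eSK du dv d) * sel (w ≤ -d) (eSK u0 v0 w))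
                = ∑' w : ℤ, eSK du dv d * sel (w ≤ -d) (eSK u0 v0 w) :=
              tsum_congr fun w => by rw [sel_pos hd]
            rw [hL, sel_pos hd, ENNReal.tsum_mul_left]
          · have hL : (∑' w : ℤ, sel (d ≤ -1) (eSK du dv d) * sel (w ≤ -d) (eSK u0 v0 w))
                = 0 :=
              ENNReal.summable.tsum_eq_zero_iff |>.mpr (fun w => by rw [sel_neg hd, zero_mul])
            rw [hL, sel_neg hd]

open ENNReal in
lemma G_move {dp dm : ℝ} (hdm : 0 < dm) (hmd : dm < dp) (hD : 100000 ≤ dp)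
    (hgap : 8 * Real.sqrt (dp * Real.log dp) ≤ dp - dm)
    {u0 v0 du dv : ℝ} (hu0 : 0 ≤ u0) (hv0 : 0 ≤ v0) (hdu : 0 ≤ du) (hdv : 0 ≤ dv)
    (hu0dp : dp - 1 ≤ u0) (hv0dm : v0 ≤ dm + (dp ^ 9)⁻¹) (hdvt : dv * tC dp dm ≤ 1)
    {P Q : ℤ → ℤ → Prop}
    (hPQ : ∀ d w : ℤ, P d w → Q d w ∨ (1 ≤ d ∧ w ≤ 0) ∨ (d ≤ -1 ∧ w ≤ -d)) :
    (∑' (d : ℤ) (w : ℤ), sel (P d w) (eSK du dv d * eSK u0 v0 w))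
      ≤ (∑' (d : ℤ) (w : ℤ), sel (Q d w) (eSK du dv d * eSK u0 v0 w))
        + ENNReal.ofReal ((du + Real.exp 1 * tC dp dm * dv) * tauB dp) := by
  have hdp1 : (1:ℝ) ≤ dp := by linarith
  have ht1 : (1:ℝ) ≤ tC dp dm := t_ge_one hdm hmd hdp1
  have ht0 : (0:ℝ) < tC dp dm := by linarith
  have htau0 : (0:ℝ) < tauB dp := by unfold tauB; positivity
  refine (double_err_bound hu0 hv0 hdu hdv hPQ).trans ?_
  rw [add_assoc]
  refine add_le_add_right ?_ _
  have hE2 : (∑' d : ℤ, sel (1 ≤ d) (eSK du dv d)) * (∑' w : ℤ, sel (w ≤ 0) (eSK u0 v0 w))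
      ≤ ENNReal.ofReal (du * tauB dp) := by
    calc (∑' d : ℤ, sel (1 ≤ d) (eSK du dv d)) * (∑' w : ℤ, sel (w ≤ 0) (eSK u0 v0 w))
        ≤ ENNReal.ofReal du * ENNReal.ofReal (tauB dp) :=
          mul_le_mul' (head_plus_le hdu hdv) (tail0_bound hdm hmd hD hgap hu0 hv0 hu0dp hv0dm)
      _ = ENNReal.ofReal (du * tauB dp) := (ENNReal.ofReal_mul hdu).symm
  have hE3 : (∑' d : ℤ, sel (d ≤ -1) (eSK du dv d * ∑' w : ℤ, sel (w ≤ -d) (eSK u0 v0 w)))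
      ≤ ENNReal.ofReal (Real.exp 1 * tC dp dm * dv * tauB dp) := by
    have hper : ∀ d : ℤ, sel (d ≤ -1) (eSK du dv d * ∑' w : ℤ, sel (w ≤ -d) (eSK u0 v0 w))
        ≤ sel (d ≤ -1) (eSK du dv d * ENNReal.ofReal (tC dp dm ^ (-d))) *
            ENNReal.ofReal (tauB dp) := by
      intro d
      rw [← sel_mul_right]
      refine sel_mono' fun hd => ?_
      rw [mul_assoc]
      refine mul_le_mul_right ?_ _
      refine (tail_bound hdm hmd hD hgap hu0 hv0 hu0dp hv0dm (-d)).trans (le_of_eq ?_)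
      rw [ENNReal.ofReal_mul (zpow_nonneg ht0.le _)]
    calc (∑' d : ℤ, sel (d ≤ -1) (eSK du dv d * ∑' w : ℤ, sel (w ≤ -d) (eSK u0 v0 w)))
        ≤ ∑' d : ℤ, sel (d ≤ -1) (eSK du dv d * ENNReal.ofReal (tC dp dm ^ (-d))) *
            ENNReal.ofReal (tauB dp) := ENNReal.tsum_le_tsum hper
      _ = (∑' d : ℤ, sel (d ≤ -1) (eSK du dv d * ENNReal.ofReal (tC dp dm ^ (-d)))) *
            ENNReal.ofReal (tauB dp) := ENNReal.tsum_mul_right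
      _ ≤ ENNReal.ofReal (dv * tC dp dm * Real.exp (dv * tC dp dm)) *
            ENNReal.ofReal (tauB dp) :=
          mul_le_mul_left (head_minus_le hdu hdv ht1) _
      _ ≤ ENNReal.ofReal (Real.exp 1 * tC dp dm * dv * tauB dp) := by
          rw [← ENNReal.ofReal_mul (by positivity)]
          apply ENNReal.ofReal_le_ofReal
          have hexp : Real.exp (dv * tC dp dm) ≤ Real.exp 1 := Real.exp_le_exp.mpr hdvt
          have h1 : (0:ℝ) ≤ dv * tC dp dm := by positivity
          nlinarith [Real.exp_pos (dv * tC dp dm), mul_nonneg h1 htau0.le]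
  calc (∑' d : ℤ, sel (1 ≤ d) (eSK du dv d)) * (∑' w : ℤ, sel (w ≤ 0) (eSK u0 v0 w))
        + (∑' d : ℤ, sel (d ≤ -1) (eSK du dv d * ∑' w : ℤ, sel (w ≤ -d) (eSK u0 v0 w)))
      ≤ ENNReal.ofReal (du * tauB dp) + ENNReal.ofReal (Real.exp 1 * tC dp dm * dv * tauB dp) :=
        add_le_add hE2 hE3
    _ = ENNReal.ofReal ((du + Real.exp 1 * tC dp dm * dv) * tauB dp) := by
        rw [← ENNReal.ofReal_add (by positivity) (by positivity)]
        congr 1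
        ring

lemma exp_one_le_three : Real.exp 1 ≤ 3 := by
  have := Real.exp_one_lt_d9.le
  linarith

open ENNReal in
lemma contract_num {dp dm : ℝ} (hdm : 0 < dm) (hmd : dm < dp) (hD : 100000 ≤ dp) :
    2 * dp * ((1 + Real.exp 1 * tC dp dm) * tauB dp) ≤ 1/16 := by
  have hdp1 : (1:ℝ) ≤ dp := by linarith
  have hdp0 : (0:ℝ) < dp := by linarith
  have ht := t_le_dp hdm hdp1
  have ht0 : (0:ℝ) ≤ tC dp dm := Real.sqrt_nonneg _
  have he := exp_one_le_three
  have he0 := (Real.exp_pos 1).le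
  have h1 : 1 + Real.exp 1 * tC dp dm ≤ 4 * dp := by nlinarith
  have htau : tauB dp ≤ 21 * (dp ^ 16)⁻¹ := by
    unfold tauB
    have := exp3_le
    have : (0:ℝ) < (dp ^ 16)⁻¹ := by positivity
    nlinarith [exp3_le]
  have htau0 : (0:ℝ) ≤ tauB dp := by unfold tauB; positivity
  have hstep : 2 * dp * ((1 + Real.exp 1 * tC dp dm) * tauB dp)
      ≤ 2 * dp * (4 * dp * (21 * (dp ^ 16)⁻¹)) := by
    have h2 : (1 + Real.exp 1 * tC dp dm) * tauB dp ≤ 4 * dp * (21 * (dp ^ 16)⁻¹) := by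
      have h3 : (0:ℝ) ≤ 1 + Real.exp 1 * tC dp dm := by positivity
      nlinarith
    nlinarith
  refine hstep.trans ?_
  have hkey : 2 * dp * (4 * dp * (21 * (dp ^ 16)⁻¹)) = 168 * (dp ^ 14)⁻¹ := by
    have h16 : dp ^ 16 = dp ^ 2 * dp ^ 14 := by ring
    rw [h16, mul_inv]
    field_simp
    ring
  rw [hkey]
  have h14 : dp ≤ dp ^ 14 := by
    calc dp = dp ^ 1 := (pow_one dp).symm
      _ ≤ dp ^ 14 := pow_le_pow_right₀ hdp1 (by norm_num)
  have hinv : (dp ^ 14)⁻¹ ≤ dp⁻¹ := by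
    apply inv_anti₀ hdp0 h14
  have : 168 * (dp ^ 14)⁻¹ ≤ 168 * dp⁻¹ := by nlinarith
  have hfin : 168 * dp⁻¹ ≤ 1/16 := by
    rw [div_eq_mul_inv, one_mul]
    have : (2688:ℝ) ≤ dp := by linarith
    have h0 : (0:ℝ) < 16⁻¹ := by norm_num
    rw [show (168:ℝ) * dp⁻¹ = 168 / dp by ring, div_le_iff₀ hdp0]
    nlinarith
  linarith

lemma min_sub_le_abs (a b : ℝ) : a - min a b ≤ |a - b| := by
  rcases le_total a b with h | h
  · rw [min_eq_left h]
    simp [abs_nonneg]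
  · rw [min_eq_right h]
    exact le_abs_self _

lemma sub_min_nonneg (a b : ℝ) : 0 ≤ a - min a b := by
  rcases le_total a b with h | h
  · rw [min_eq_left h]; linarith
  · rw [min_eq_right h]; linarith

open ENNReal in
lemma toReal_diff_le {a b c : ℝ≥0∞} (hab : a ≤ b + c) (hba : b ≤ a + c)
    (ha : a ≠ ⊤) (hb : b ≠ ⊤) (hc : c ≠ ⊤) : |a.toReal - b.toReal| ≤ c.toReal := by
  rw [abs_le]
  constructor
  · have h1 := ENNReal.toReal_mono (ENNReal.add_ne_top.mpr ⟨ha, hc⟩) hba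
    rw [ENNReal.toReal_add ha hc] at h1
    linarith
  · have h1 := ENNReal.toReal_mono (ENNReal.add_ne_top.mpr ⟨hb, hc⟩) hab
    rw [ENNReal.toReal_add hb hc] at h1
    linarith

open ENNReal in
lemma key_diff {dp dm : ℝ} (hdm : 0 < dm) (hmd : dm < dp) (hD : 100000 ≤ dp)
    (hgap : 8 * Real.sqrt (dp * Real.log dp) ≤ dp - dm)
    {p q : ℤ → ℝ} (hp : IsProbOn3 p) (hsp : Skewed dp p)
    (hq : IsProbOn3 q) (hsq : Skewed dp q) (A : ℤ → Prop)
    (hA : ∀ d w : ℤ, A (d + w) → A w ∨ (1 ≤ d ∧ w ≤ 0) ∨ (d ≤ -1 ∧ w ≤ -d))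
    (hA' : ∀ d w : ℤ, A w → A (d + w) ∨ (1 ≤ d ∧ w ≤ 0) ∨ (d ≤ -1 ∧ w ≤ -d)) :
    |(∑' z : ℤ, sel (A z) (eSK (La dp dm p) (Lb dp dm p) z)).toReal
      - (∑' z : ℤ, sel (A z) (eSK (La dp dm q) (Lb dp dm q) z)).toReal|
    ≤ (1/16) * (|p 1 - q 1| + |p (-1) - q (-1)|) := by
  have hdp1 : (1:ℝ) ≤ dp := by linarith
  have hdp0 : (0:ℝ) < dp := by linarith
  have ht1 : (1:ℝ) ≤ tC dp dm := t_ge_one hdm hmd hdp1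
  have htdp := t_le_dp hdm hdp1
  have htau0 : (0:ℝ) < tauB dp := by unfold tauB; positivity
  set D := |p 1 - q 1| + |p (-1) - q (-1)| with hDdef
  have hD0 : 0 ≤ D := by positivity
  -- basic bounds on the parameters
  have hLap := La_nonneg hp hdp0.le hdm.le
  have hLaq := La_nonneg hq hdp0.le hdm.le
  have hLbp := Lb_nonneg hp hdp0.le hdm.le
  have hLbq := Lb_nonneg hq hdp0.le hdm.le
  have hLagep := La_ge hp hsp hdp1 hdm.le
  have hLageq := La_ge hq hsq hdp1 hdm.le
  have hLblep := Lb_le hp hsp hdp1 hdm.le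
  have hLbleq := Lb_le hq hsq hdp1 hdm.le
  set u0 := min (La dp dm p) (La dp dm q) with hu0def
  set v0 := min (Lb dp dm p) (Lb dp dm q) with hv0def
  have hu00 : 0 ≤ u0 := le_min hLap hLaq
  have hv00 : 0 ≤ v0 := le_min hLbp hLbq
  have hu0dp : dp - 1 ≤ u0 := le_min hLagep hLageq
  have hv0dm : v0 ≤ dm + (dp ^ 9)⁻¹ := (min_le_left _ _).trans hLblep
  -- difference bounds
  have hLa_diff : |La dp dm p - La dp dm q| ≤ dp * D := by
    have h1 : La dp dm p - La dp dm q = dp * (p 1 - q 1) + dm * (p (-1) - q (-1)) := by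
      unfold La
      ring
    rw [h1]
    refine (abs_add_le _ _).trans ?_
    rw [abs_mul, abs_mul, abs_of_pos hdp0, abs_of_pos hdm]
    nlinarith [abs_nonneg (p 1 - q 1), abs_nonneg (p (-1) - q (-1))]
  have hLb_diff : |Lb dp dm p - Lb dp dm q| ≤ dp * D := by
    have h1 : Lb dp dm p - Lb dp dm q = dp * (p (-1) - q (-1)) + dm * (p 1 - q 1) := by
      unfold Lb
      ring
    rw [h1]
    refine (abs_add_le _ _).trans ?_
    rw [abs_mul, abs_mul, abs_of_pos hdp0, abs_of_pos hdm]
    nlinarith [abs_nonneg (p 1 - q 1), abs_nonneg (p (-1) - q (-1))]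
  -- smallness of the v-increments
  obtain ⟨hcp, hbp, hap⟩ := skew_bounds hp hsp hdp1
  obtain ⟨hcq, hbq, haq⟩ := skew_bounds hq hsq hdp1
  have hsmallD : |Lb dp dm p - Lb dp dm q| ≤ 2 * (dp ^ 9)⁻¹ := by
    have hskp : 1 - (dp ^ 10)⁻¹ ≤ p 1 := hsp
    have hskq : 1 - (dp ^ 10)⁻¹ ≤ q 1 := hsq
    have heps := dpeps hdp0
    have h1 : |p 1 - q 1| ≤ (dp ^ 10)⁻¹ := abs_le.mpr ⟨by linarith, by linarith⟩
    have h2 : |p (-1) - q (-1)| ≤ (dp ^ 10)⁻¹ := abs_le.mpr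
      ⟨by linarith [hp.1 (-1), hq.1 (-1)], by linarith [hp.1 (-1), hq.1 (-1)]⟩
    have h3 : Lb dp dm p - Lb dp dm q = dp * (p (-1) - q (-1)) + dm * (p 1 - q 1) := by
      unfold Lb; ring
    rw [h3]
    refine (abs_add_le _ _).trans ?_
    rw [abs_mul, abs_mul, abs_of_pos hdp0, abs_of_pos hdm]
    nlinarith [abs_nonneg (p 1 - q 1), abs_nonneg (p (-1) - q (-1))]
  have hdvt : ∀ r : ℝ, 0 ≤ r - v0 → r - v0 ≤ |Lb dp dm p - Lb dp dm q| →
      (r - v0) * tC dp dm ≤ 1 := by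
    intro r h0 hr
    have h1 : r - v0 ≤ 2 * (dp ^ 9)⁻¹ := hr.trans hsmallD
    have h2 : (dp ^ 9)⁻¹ * dp = (dp ^ 8)⁻¹ := by
      rw [show dp ^ 9 = dp ^ 8 * dp by ring, mul_inv, mul_assoc,
        inv_mul_cancel₀ hdp0.ne', mul_one]
    have h3 : (dp ^ 8)⁻¹ ≤ (2:ℝ)⁻¹ := by
      apply inv_anti₀ (by norm_num)
      calc (2:ℝ) ≤ dp := by linarith
        _ = dp ^ 1 := (pow_one dp).symm
        _ ≤ dp ^ 8 := pow_le_pow_right₀ hdp1 (by norm_num)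
    have ht0 : (0:ℝ) ≤ tC dp dm := by linarith
    calc (r - v0) * tC dp dm ≤ 2 * (dp ^ 9)⁻¹ * dp := by
          nlinarith [htdp, inv_nonneg.mpr (le_of_lt (pow_pos hdp0 9))]
      _ = 2 * (dp ^ 8)⁻¹ := by rw [mul_assoc, h2]
      _ ≤ 1 := by linarith
  -- increments
  have hdup0 : 0 ≤ La dp dm p - u0 := sub_min_nonneg _ _
  have hduq0 : 0 ≤ La dp dm q - u0 := by
    rw [hu0def, min_comm]
    exact sub_min_nonneg _ _
  have hdvp0 : 0 ≤ Lb dp dm p - v0 := sub_min_nonneg _ _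
  have hdvq0 : 0 ≤ Lb dp dm q - v0 := by
    rw [hv0def, min_comm]
    exact sub_min_nonneg _ _
  have hdup : La dp dm p - u0 ≤ dp * D := (min_sub_le_abs _ _).trans hLa_diff
  have hduq : La dp dm q - u0 ≤ dp * D := by
    rw [hu0def, min_comm]
    exact (min_sub_le_abs _ _).trans (by rw [abs_sub_comm]; exact hLa_diff)
  have hdvp : Lb dp dm p - v0 ≤ dp * D := (min_sub_le_abs _ _).trans hLb_diff
  have hdvq : Lb dp dm q - v0 ≤ dp * D := by
    rw [hv0def, min_comm]
    exact (min_sub_le_abs _ _).trans (by rw [abs_sub_comm]; exact hLb_diff)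
  have hdvtp : (Lb dp dm p - v0) * tC dp dm ≤ 1 :=
    hdvt _ hdvp0 (min_sub_le_abs _ _)
  have hdvtq : (Lb dp dm q - v0) * tC dp dm ≤ 1 := by
    refine hdvt _ hdvq0 ?_
    rw [hv0def, min_comm, abs_sub_comm]
    exact min_sub_le_abs _ _
  -- error quantities
  set Ep : ℝ≥0∞ := ENNReal.ofReal
    (((La dp dm p - u0) + Real.exp 1 * tC dp dm * (Lb dp dm p - v0)) * tauB dp) with hEp
  set Eq' : ℝ≥0∞ := ENNReal.ofReal
    (((La dp dm q - u0) + Real.exp 1 * tC dp dm * (Lb dp dm q - v0)) * tauB dp) with hEq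
  -- the four moves
  have hmovep : (∑' z : ℤ, sel (A z) (eSK (La dp dm p) (Lb dp dm p) z))
      ≤ (∑' w : ℤ, sel (A w) (eSK u0 v0 w)) + Ep := by
    have h1 := G_move hdm hmd hD hgap hu00 hv00 hdup0 hdvp0 hu0dp hv0dm hdvtp
      (P := fun d w => A (d + w)) (Q := fun d w => A w) hA
    rw [← G_expand hu00 hv00 hdup0 hdvp0 A, ← GW_expand hu00 hv00 hdup0 hdvp0 A] at h1
    rw [show u0 + (La dp dm p - u0) = La dp dm p by ring,
        show v0 + (Lb dp dm p - v0) = Lb dp dm p by ring] at h1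
    exact h1
  have hmoveq : (∑' z : ℤ, sel (A z) (eSK (La dp dm q) (Lb dp dm q) z))
      ≤ (∑' w : ℤ, sel (A w) (eSK u0 v0 w)) + Eq' := by
    have h1 := G_move hdm hmd hD hgap hu00 hv00 hduq0 hdvq0 hu0dp hv0dm hdvtq
      (P := fun d w => A (d + w)) (Q := fun d w => A w) hA
    rw [← G_expand hu00 hv00 hduq0 hdvq0 A, ← GW_expand hu00 hv00 hduq0 hdvq0 A] at h1
    rw [show u0 + (La dp dm q - u0) = La dp dm q by ring,
        show v0 + (Lb dp dm q - v0) = Lb dp dm q by ring] at h1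
    exact h1
  have hmovep' : (∑' w : ℤ, sel (A w) (eSK u0 v0 w))
      ≤ (∑' z : ℤ, sel (A z) (eSK (La dp dm p) (Lb dp dm p) z)) + Ep := by
    have h1 := G_move hdm hmd hD hgap hu00 hv00 hdup0 hdvp0 hu0dp hv0dm hdvtp
      (P := fun d w => A w) (Q := fun d w => A (d + w)) hA'
    rw [← G_expand hu00 hv00 hdup0 hdvp0 A, ← GW_expand hu00 hv00 hdup0 hdvp0 A] at h1
    rw [show u0 + (La dp dm p - u0) = La dp dm p by ring,
        show v0 + (Lb dp dm p - v0) = Lb dp dm p by ring] at h1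
    exact h1
  have hmoveq' : (∑' w : ℤ, sel (A w) (eSK u0 v0 w))
      ≤ (∑' z : ℤ, sel (A z) (eSK (La dp dm q) (Lb dp dm q) z)) + Eq' := by
    have h1 := G_move hdm hmd hD hgap hu00 hv00 hduq0 hdvq0 hu0dp hv0dm hdvtq
      (P := fun d w => A w) (Q := fun d w => A (d + w)) hA'
    rw [← G_expand hu00 hv00 hduq0 hdvq0 A, ← GW_expand hu00 hv00 hduq0 hdvq0 A] at h1
    rw [show u0 + (La dp dm q - u0) = La dp dm q by ring,
        show v0 + (Lb dp dm q - v0) = Lb dp dm q by ring] at h1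
    exact h1
  -- combine
  have hab : (∑' z : ℤ, sel (A z) (eSK (La dp dm p) (Lb dp dm p) z))
      ≤ (∑' z : ℤ, sel (A z) (eSK (La dp dm q) (Lb dp dm q) z)) + (Ep + Eq') := by
    calc (∑' z : ℤ, sel (A z) (eSK (La dp dm p) (Lb dp dm p) z))
        ≤ (∑' w : ℤ, sel (A w) (eSK u0 v0 w)) + Ep := hmovep
      _ ≤ ((∑' z : ℤ, sel (A z) (eSK (La dp dm q) (Lb dp dm q) z)) + Eq') + Ep :=
          add_le_add_left hmoveq' _
      _ = (∑' z : ℤ, sel (A z) (eSK (La dp dm q) (Lb dp dm q) z)) + (Ep + Eq') := by ring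
  have hba : (∑' z : ℤ, sel (A z) (eSK (La dp dm q) (Lb dp dm q) z))
      ≤ (∑' z : ℤ, sel (A z) (eSK (La dp dm p) (Lb dp dm p) z)) + (Ep + Eq') := by
    calc (∑' z : ℤ, sel (A z) (eSK (La dp dm q) (Lb dp dm q) z))
        ≤ (∑' w : ℤ, sel (A w) (eSK u0 v0 w)) + Eq' := hmoveq
      _ ≤ ((∑' z : ℤ, sel (A z) (eSK (La dp dm p) (Lb dp dm p) z)) + Ep) + Eq' :=
          add_le_add_left hmovep' _
      _ = (∑' z : ℤ, sel (A z) (eSK (La dp dm p) (Lb dp dm p) z)) + (Ep + Eq') := by ring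
  have hfinp : (∑' z : ℤ, sel (A z) (eSK (La dp dm p) (Lb dp dm p) z)) ≠ ⊤ :=
    ne_top_of_le_ne_top ENNReal.one_ne_top (eSK_tail_le_one hLap hLbp A)
  have hfinq : (∑' z : ℤ, sel (A z) (eSK (La dp dm q) (Lb dp dm q) z)) ≠ ⊤ :=
    ne_top_of_le_ne_top ENNReal.one_ne_top (eSK_tail_le_one hLaq hLbq A)
  have hfinE : Ep + Eq' ≠ ⊤ :=
    ENNReal.add_ne_top.mpr ⟨ENNReal.ofReal_ne_top, ENNReal.ofReal_ne_top⟩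
  refine (toReal_diff_le hab hba hfinp hfinq hfinE).trans ?_
  -- numeric bound on the error
  have hEpR : (0:ℝ) ≤ ((La dp dm p - u0) + Real.exp 1 * tC dp dm * (Lb dp dm p - v0)) * tauB dp := by
    have := (Real.exp_pos 1).le
    have ht0 : (0:ℝ) ≤ tC dp dm := by linarith
    positivity
  have hEqR : (0:ℝ) ≤ ((La dp dm q - u0) + Real.exp 1 * tC dp dm * (Lb dp dm q - v0)) * tauB dp := by
    have := (Real.exp_pos 1).le
    have ht0 : (0:ℝ) ≤ tC dp dm := by linarith
    positivity
  rw [hEp, hEq, ← ENNReal.ofReal_add hEpR hEqR, ENNReal.toReal_ofReal (by linarith)]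
  have he0 := (Real.exp_pos 1).le
  have ht0 : (0:ℝ) ≤ tC dp dm := by linarith
  have hsum : ((La dp dm p - u0) + Real.exp 1 * tC dp dm * (Lb dp dm p - v0)) * tauB dp
      + ((La dp dm q - u0) + Real.exp 1 * tC dp dm * (Lb dp dm q - v0)) * tauB dp
      ≤ (2 * dp * ((1 + Real.exp 1 * tC dp dm) * tauB dp)) * D := by
    have h1 : (La dp dm p - u0) + Real.exp 1 * tC dp dm * (Lb dp dm p - v0)
        ≤ dp * D * (1 + Real.exp 1 * tC dp dm) := by
      nlinarith [mul_le_mul_of_nonneg_left hdvp (mul_nonneg he0 ht0)]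
    have h2 : (La dp dm q - u0) + Real.exp 1 * tC dp dm * (Lb dp dm q - v0)
        ≤ dp * D * (1 + Real.exp 1 * tC dp dm) := by
      nlinarith [mul_le_mul_of_nonneg_left hdvq (mul_nonneg he0 ht0)]
    nlinarith [mul_le_mul_of_nonneg_right (add_le_add h1 h2) htau0.le]
  refine hsum.trans ?_
  have hfin := mul_le_mul_of_nonneg_right (contract_num hdm hmd hD) hD0
  linarith [hfin]

open ENNReal in
lemma T_contract {dp dm : ℝ} (hdm : 0 < dm) (hmd : dm < dp) (hD : 100000 ≤ dp)
    (hgap : 8 * Real.sqrt (dp * Real.log dp) ≤ dp - dm)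
    {p q : ℤ → ℝ} (hp : IsProbOn3 p) (hsp : Skewed dp p)
    (hq : IsProbOn3 q) (hsq : Skewed dp q) (z : ℤ) :
    |Twp dp dm p z - Twp dp dm q z| ≤ (1/16) * (|p 1 - q 1| + |p (-1) - q (-1)|) := by
  have hdp0 : (0:ℝ) < dp := by linarith
  have hRHS : (0:ℝ) ≤ (1/16) * (|p 1 - q 1| + |p (-1) - q (-1)|) := by positivity
  by_cases h1 : z = 1
  · subst h1
    rw [Twp_one hp hdp0 hdm, Twp_one hq hdp0 hdm]
    exact key_diff hdm hmd hD hgap hp hsp hq hsq (fun z => 1 ≤ z)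
      (fun d w h => by omega) (fun d w h => by omega)
  by_cases h0 : z = 0
  · subst h0
    rw [Twp_zero hp hdp0 hdm, Twp_zero hq hdp0 hdm]
    have hrw : ∀ u v : ℝ, eSK u v 0 = ∑' w : ℤ, sel (w = 0) (eSK u v w) := by
      intro u v
      rw [tsum_eq_single 0 (fun w hw => sel_neg hw _), sel_pos rfl]
    rw [hrw, hrw]
    exact key_diff hdm hmd hD hgap hp hsp hq hsq (fun z => z = 0)
      (fun d w h => by omega) (fun d w h => by omega)
  by_cases hm : z = -1
  · subst hm
    rw [Twp_negone hp hdp0 hdm, Twp_negone hq hdp0 hdm]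
    exact key_diff hdm hmd hD hgap hp hsp hq hsq (fun z => z ≤ -1)
      (fun d w h => by omega) (fun d w h => by omega)
  · rw [Twp_other dp dm p h1 h0 hm, Twp_other dp dm q h1 h0 hm]
    simpa using hRHS

lemma prob_val_bounds {p : ℤ → ℝ} (hp : IsProbOn3 p) : ∀ z, 0 ≤ p z ∧ p z ≤ 1 := by
  intro z
  obtain ⟨hnn, hsupp, hsum⟩ := hp
  refine ⟨hnn z, ?_⟩
  by_cases h1 : z = 1
  · subst h1; linarith [hnn (-1), hnn 0]
  by_cases h0 : z = 0
  · subst h0; linarith [hnn (-1), hnn 1]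
  by_cases hm : z = -1
  · subst hm; linarith [hnn 0, hnn 1]
  · rw [hsupp z (by simp [h1, h0, hm])]; norm_num

lemma delta1_prob : IsProbOn3 delta1 := by
  refine ⟨fun z => ?_, fun z hz => ?_, ?_⟩
  · unfold delta1; split <;> norm_num
  · simp only [Set.mem_insert_iff, Set.mem_singleton_iff] at hz
    push_neg at hz
    unfold delta1
    rw [if_neg hz.2.2]
  · unfold delta1; norm_num

lemma delta1_skew {dp : ℝ} (hdp : 0 < dp) : Skewed dp delta1 := by
  unfold Skewed delta1
  norm_num
  positivity

end USFP
end

/-- Proposition 2.5: the operator `𝒯` has a unique skewed fixed point `p*`, and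
`𝒯^t(0,0,1) → p*` as `t → ∞`. -/
theorem unique_skewed_fixed_point :
    ∃ c : ℝ, 0 < c ∧ ∃ D : ℝ, ∀ dp dm : ℝ,
    0 < dm → dm < dp → D ≤ dp → c * Real.sqrt (dp * Real.log dp) ≤ dp - dm →
    ∃ pstar : ℤ → ℝ,
      (IsProbOn3 pstar ∧ Skewed dp pstar ∧ Twp dp dm pstar = pstar) ∧
      (∀ q : ℤ → ℝ, IsProbOn3 q → Skewed dp q → Twp dp dm q = q → q = pstar) ∧
      ∀ z : ℤ, Filter.Tendsto (fun t : ℕ => ((Twp dp dm)^[t] delta1) z)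
        Filter.atTop (nhds (pstar z)) := by
  classical
  refine ⟨8, by norm_num, 100000, ?_⟩
  intro dp dm hdm hmd hD hgap
  have hdp0 : (0:ℝ) < dp := by linarith
  have hdp1 : (1:ℝ) ≤ dp := by linarith
  have hgap' : 8 * Real.sqrt (dp * Real.log dp) ≤ dp - dm := hgap
  set T := Twp dp dm with hTdef
  set P : ℕ → (ℤ → ℝ) := fun t => (Twp dp dm)^[t] delta1 with hPdef
  have hPsucc : ∀ t, P (t+1) = T (P t) := fun t => Function.iterate_succ_apply' _ _ _
  have hPS : ∀ t, IsProbOn3 (P t) ∧ Skewed dp (P t) := by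
    intro t
    induction t with
    | zero => exact ⟨USFP.delta1_prob, USFP.delta1_skew hdp0⟩
    | succ n ih =>
      rw [hPsucc n]
      exact ⟨USFP.T_prob hdp0 hdm ih.1, USFP.T_skew hdm hmd hD hgap' ih.1 ih.2⟩
  have hcon : ∀ (p q : ℤ → ℝ), IsProbOn3 p → Skewed dp p → IsProbOn3 q → Skewed dp q →
      ∀ z : ℤ, |T p z - T q z| ≤ (1/16) * (|p 1 - q 1| + |p (-1) - q (-1)|) :=
    fun p q hp hsp hq hsq z => USFP.T_contract hdm hmd hD hgap' hp hsp hq hsq z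
  -- per-coordinate geometric decay
  have hstep : ∀ t, ∀ z : ℤ, |P (t+1) z - P t z| ≤ (1/8)^t := by
    intro t
    induction t with
    | zero =>
      intro z
      have h1 := USFP.prob_val_bounds (hPS 1).1 z
      have h0 := USFP.prob_val_bounds (hPS 0).1 z
      rw [pow_zero]
      rw [abs_le]
      constructor <;> linarith [h1.1, h1.2, h0.1, h0.2]
    | succ n ih =>
      intro z
      have e1 : P (n+2) = T (P (n+1)) := hPsucc (n+1)
      have e2 : P (n+1) = T (P n) := hPsucc n
      have hb := hcon (P (n+1)) (P n) (hPS (n+1)).1 (hPS (n+1)).2 (hPS n).1 (hPS n).2 z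
      rw [← e1, ← e2] at hb
      have h1 := ih 1
      have hm1 := ih (-1)
      calc |P (n+1+1) z - P (n+1) z| ≤ (1/16) * (|P (n+1) 1 - P n 1| + |P (n+1) (-1) - P n (-1)|) := hb
        _ ≤ (1/16) * ((1/8)^n + (1/8)^n) := by
            have := abs_nonneg (P (n+1) 1 - P n 1)
            linarith
        _ = (1/8)^(n+1) := by ring
  -- convergence of each coordinate
  have hcauchy : ∀ z : ℤ, ∃ L : ℝ, Filter.Tendsto (fun t => P t z) Filter.atTop (nhds L) := by
    intro z
    have hC : CauchySeq (fun t => P t z) := by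
      apply cauchySeq_of_le_geometric (r := 1/8) 1 (by norm_num)
      intro n
      rw [Real.dist_eq, abs_sub_comm, one_mul]
      exact hstep n z
    exact cauchySeq_tendsto_of_complete hC
  set pstar : ℤ → ℝ := fun z => (hcauchy z).choose with hpstardef
  have htends : ∀ z : ℤ, Filter.Tendsto (fun t => P t z) Filter.atTop (nhds (pstar z)) :=
    fun z => (hcauchy z).choose_spec
  -- pstar is a skewed probability
  have hpstar_nonneg : ∀ z, 0 ≤ pstar z :=
    fun z => ge_of_tendsto' (htends z) (fun t => (hPS t).1.1 z)
  have hpstar_supp : ∀ z : ℤ, z ∉ ({-1, 0, 1} : Set ℤ) → pstar z = 0 := by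
    intro z hz
    have h0 : ∀ t, P t z = 0 := fun t => (hPS t).1.2.1 z hz
    have := htends z
    rw [show (fun t => P t z) = fun _ : ℕ => (0:ℝ) from funext h0] at this
    exact tendsto_nhds_unique this tendsto_const_nhds
  have hpstar_sum : pstar (-1) + pstar 0 + pstar 1 = 1 := by
    have h1 : Filter.Tendsto (fun t => P t (-1) + P t 0 + P t 1) Filter.atTop
        (nhds (pstar (-1) + pstar 0 + pstar 1)) :=
      ((htends (-1)).add (htends 0)).add (htends 1)
    have hsum_t : ∀ t, P t (-1) + P t 0 + P t 1 = 1 := fun t => (hPS t).1.2.2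
    rw [show (fun t => P t (-1) + P t 0 + P t 1) = fun _ : ℕ => (1:ℝ) from funext hsum_t] at h1
    exact tendsto_nhds_unique h1 tendsto_const_nhds
  have hpstar_prob : IsProbOn3 pstar := ⟨hpstar_nonneg, hpstar_supp, hpstar_sum⟩
  have hpstar_skew : Skewed dp pstar :=
    ge_of_tendsto' (htends 1) (fun t => (hPS t).2)
  -- the distance from pstar to the iterates tends to 0
  have hDto : Filter.Tendsto (fun t => |pstar 1 - P t 1| + |pstar (-1) - P t (-1)|)
      Filter.atTop (nhds 0) := by
    have h1 : Filter.Tendsto (fun t => |pstar 1 - P t 1|) Filter.atTop (nhds 0) := by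
      have hsub : Filter.Tendsto (fun t => pstar 1 - P t 1) Filter.atTop
          (nhds (pstar 1 - pstar 1)) := tendsto_const_nhds.sub (htends 1)
      have habs := hsub.abs
      simpa using habs
    have h2 : Filter.Tendsto (fun t => |pstar (-1) - P t (-1)|) Filter.atTop (nhds 0) := by
      have hsub : Filter.Tendsto (fun t => pstar (-1) - P t (-1)) Filter.atTop
          (nhds (pstar (-1) - pstar (-1))) := tendsto_const_nhds.sub (htends (-1))
      have habs := hsub.abs
      simpa using habs
    simpa using h1.add h2
  -- pstar is a fixed point
  have hfix : T pstar = pstar := by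
    funext z
    by_cases hz : z ∈ ({-1, 0, 1} : Set ℤ)
    · have hb : ∀ t, |T pstar z - P (t+1) z|
          ≤ (1/16) * (|pstar 1 - P t 1| + |pstar (-1) - P t (-1)|) := by
        intro t
        have := hcon pstar (P t) hpstar_prob hpstar_skew (hPS t).1 (hPS t).2 z
        rwa [← hPsucc t] at this
      have hLHS : Filter.Tendsto (fun t => |T pstar z - P (t+1) z|) Filter.atTop
          (nhds (|T pstar z - pstar z|)) := by
        have hshift : Filter.Tendsto (fun t => P (t+1) z) Filter.atTop (nhds (pstar z)) :=
          (htends z).comp (Filter.tendsto_add_atTop_nat 1)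
        exact (tendsto_const_nhds.sub hshift).abs
      have hRHS : Filter.Tendsto
          (fun t => (1/16) * (|pstar 1 - P t 1| + |pstar (-1) - P t (-1)|)) Filter.atTop
          (nhds 0) := by
        have := hDto.const_mul (1/16 : ℝ)
        simpa using this
      have hle : |T pstar z - pstar z| ≤ 0 := le_of_tendsto_of_tendsto' hLHS hRHS hb
      have : T pstar z - pstar z = 0 := by
        have := abs_nonneg (T pstar z - pstar z)
        have habs : |T pstar z - pstar z| = 0 := le_antisymm hle this
        exact abs_eq_zero.mp habs
      linarith
    · simp only [Set.mem_insert_iff, Set.mem_singleton_iff] at hz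
      push_neg at hz
      rw [hTdef, USFP.Twp_other dp dm pstar hz.2.2 hz.2.1 hz.1]
      exact (hpstar_supp z (by simp only [Set.mem_insert_iff, Set.mem_singleton_iff]; push_neg; exact hz)).symm
  refine ⟨pstar, ⟨hpstar_prob, hpstar_skew, hfix⟩, ?_, ?_⟩
  · -- uniqueness
    intro q hqprob hqskew hqfix
    have hDq : |q 1 - pstar 1| + |q (-1) - pstar (-1)| = 0 := by
      have h1 : |q 1 - pstar 1| ≤ (1/16) * (|q 1 - pstar 1| + |q (-1) - pstar (-1)|) := by
        have := hcon q pstar hqprob hqskew hpstar_prob hpstar_skew 1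
        rwa [hqfix, hfix] at this
      have h2 : |q (-1) - pstar (-1)| ≤ (1/16) * (|q 1 - pstar 1| + |q (-1) - pstar (-1)|) := by
        have := hcon q pstar hqprob hqskew hpstar_prob hpstar_skew (-1)
        rwa [hqfix, hfix] at this
      have ha := abs_nonneg (q 1 - pstar 1)
      have hb := abs_nonneg (q (-1) - pstar (-1))
      linarith
    have h1 : q 1 = pstar 1 := by
      have := abs_nonneg (q 1 - pstar 1)
      have := abs_nonneg (q (-1) - pstar (-1))
      have : |q 1 - pstar 1| = 0 := by linarith
      have := abs_eq_zero.mp this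
      linarith
    have hm1 : q (-1) = pstar (-1) := by
      have := abs_nonneg (q 1 - pstar 1)
      have := abs_nonneg (q (-1) - pstar (-1))
      have : |q (-1) - pstar (-1)| = 0 := by linarith
      have := abs_eq_zero.mp this
      linarith
    have h0 : q 0 = pstar 0 := by
      have hq := hqprob.2.2
      have hps := hpstar_sum
      linarith
    funext z
    by_cases hz : z ∈ ({-1, 0, 1} : Set ℤ)
    · simp only [Set.mem_insert_iff, Set.mem_singleton_iff] at hz
      rcases hz with hz | hz | hz <;> subst hz
      · exact hm1
      · exact h0
      · exact h1
    · rw [hqprob.2.1 z hz, hpstar_supp z hz]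
  · exact fun z => htends z
end

section
/- There is an absolute constant c > 0 such that the following holds. Let d+ > d− > 0 satisfy d+ − d− ≥ c√(d+ ln d+) with d+ bounded below by a sufficiently large absolute constant, let G be a locally finite graph with σ : V(G) → {±1}, and let C be the core with restriction σ_C. Then for every v ∈ C, every neighbour w ∈ ∂v and every t ≥ 0: μ_{v→w}(t|G,σ) = σ(v) = μ_{v→w}(t|G,σ_C), where μ(·|G,σ) denotes Warning Propagation initialized with U = V(G) and μ(·|G,σ_C) denotes Warning Propagation initialized with U = C. -/
open Filter Topology

attribute [local instance] Classical.propDecidable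

set_option linter.unusedVariables false

/-! ### Auxiliary lemmas for `core_messages_frozen` -/

-- aux
lemma psiZ_eq_one' {x : ℤ} (h : 1 ≤ x) : psiZ x = 1 := by unfold psiZ; omega

lemma psiZ_eq_neg_one' {x : ℤ} (h : x ≤ -1) : psiZ x = -1 := by unfold psiZ; omega

lemma psiZ_bounds' (x : ℤ) : -1 ≤ psiZ x ∧ psiZ x ≤ 1 := by unfold psiZ; omega

/-- Lemma 3.1: for any `v` in the core and any neighbour `w` of `v`,
`μ_{v→w}(t|G,σ) = σ(v) = μ_{v→w}(t|G,σ_C)` for all `t ≥ 0`. -/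

theorem core_messages_frozen :
    ∃ c : ℝ, 0 < c ∧ ∃ D : ℝ, ∀ dp dm : ℝ,
    0 < dm → dm < dp → D ≤ dp → c * Real.sqrt (dp * Real.log dp) ≤ dp - dm →
    ∀ (V : Type*) (G : SimpleGraph V) [∀ v : V, Fintype (G.neighborSet v)] (σ : V → ℤ),
    (∀ x : V, σ x = 1 ∨ σ x = -1) →
    ∀ K : Set V, K = coreSet G σ dp dm c →
    ∀ v ∈ K, ∀ w : V, G.Adj v w → ∀ t : ℕ,
      wpMsg G Set.univ σ t v w = σ v ∧ wpMsg G K σ t v w = σ v := by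
  refine ⟨1, one_pos, 100000, ?_⟩
  intro dp dm hdm hdmdp hD hgap V G inst σ hσ K hKdef v hvK w hvw t
  have hdp0 : (0:ℝ) < dp := by linarith
  set R := Real.sqrt (dp * Real.log dp) with hRdef
  have h9 : Real.exp 2 ≤ 9 := by
    have hlt := Real.exp_one_lt_d9
    have he2 : Real.exp 2 = Real.exp 1 * Real.exp 1 := by
      rw [← Real.exp_add]; norm_num
    nlinarith [Real.exp_pos 1]
  have hlog : (2:ℝ) ≤ Real.log dp :=
    (Real.le_log_iff_exp_le hdp0).mpr (by linarith)
  have hR : (404:ℝ) ≤ R := by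
    have h1 : (163216:ℝ) ≤ dp * Real.log dp := by nlinarith
    nlinarith [Real.sq_sqrt (le_trans (by norm_num : (0:ℝ) ≤ 163216) h1),
      Real.sqrt_nonneg (dp * Real.log dp)]
  have hgap' : R ≤ dp - dm := by linarith
  -- the core satisfies the core property
  have hcore : ∀ u ∈ K,
      |((({w' | G.Adj u w' ∧ σ u * σ w' = 1}).ncard : ℝ) - dp)| ≤ 1 / 4 * R ∧
      |((({w' | G.Adj u w' ∧ σ u * σ w' = -1}).ncard : ℝ) - dm)| ≤ 1 / 4 * R ∧
      ({w' | G.Adj u w'} \ K).ncard ≤ 100 := by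
    intro u hu
    rw [hKdef] at hu
    obtain ⟨U, hU, huU⟩ := hu
    obtain ⟨b1, b2, b3⟩ := hU u huU
    refine ⟨b1, b2, ?_⟩
    refine le_trans (Set.ncard_le_ncard ?_ ?_) b3
    · intro x hx
      exact ⟨hx.1, fun hxU => hx.2 (by rw [hKdef]; exact Set.subset_sUnion_of_mem hU hxU)⟩
    · exact (Set.toFinite (G.neighborSet u)).subset (fun x hx => hx.1)
  -- messages are bounded
  have hbnd : ∀ (U : Set V) (s : ℕ) (a b : V),
      -1 ≤ wpMsg G U σ s a b ∧ wpMsg G U σ s a b ≤ 1 := by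
    intro U s
    induction s with
    | zero =>
      intro a b
      simp only [wpMsg]
      split
      · rcases hσ a with h | h <;> omega
      · omega
    | succ s ih =>
      intro a b
      simp only [wpMsg]
      exact psiZ_bounds' _
  have main : ∀ s : ℕ, ∀ x ∈ K, ∀ y : V,
      wpMsg G Set.univ σ s x y = σ x ∧ wpMsg G K σ s x y = σ x := by
    intro s
    induction s with
    | zero =>
      intro x hx y
      constructor <;> simp [wpMsg, hx]
    | succ s ih =>
      intro x hx y
      obtain ⟨h1, h2, h3⟩ := hcore x hx
      set N := (G.neighborFinset x).erase y with hN
      set Pp := (G.neighborFinset x).filter (fun u => σ x * σ u = 1) with hPp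
      set Pm := (G.neighborFinset x).filter (fun u => σ x * σ u = -1) with hPm
      set Out := (G.neighborFinset x).filter (fun u => u ∉ K) with hOut
      have ePp : ({w' | G.Adj x w' ∧ σ x * σ w' = 1} : Set V) = ↑Pp := by
        ext z; simp [hPp, SimpleGraph.mem_neighborFinset]
      have ePm : ({w' | G.Adj x w' ∧ σ x * σ w' = -1} : Set V) = ↑Pm := by
        ext z; simp [hPm, SimpleGraph.mem_neighborFinset]
      have eOut : (({w' | G.Adj x w'} : Set V) \ K) = ↑Out := by
        ext z; simp [hOut, SimpleGraph.mem_neighborFinset]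
      rw [ePp, Set.ncard_coe_finset] at h1
      rw [ePm, Set.ncard_coe_finset] at h2
      rw [eOut, Set.ncard_coe_finset] at h3
      have hp := abs_le.mp h1
      have hm := abs_le.mp h2
      have key : ∀ m : V → ℤ, (∀ u, -1 ≤ m u ∧ m u ≤ 1) → (∀ u ∈ K, m u = σ u) →
          psiZ (∑ u ∈ N, m u) = σ x := by
        intro m hmb hmK
        set A := N.filter (fun u => u ∈ K ∧ σ u = σ x) with hA
        set B := N.filter (fun u => ¬(u ∈ K ∧ σ u = σ x)) with hB
        have hsplit : ∑ u ∈ A, m u + ∑ u ∈ B, m u = ∑ u ∈ N, m u :=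
          Finset.sum_filter_add_sum_filter_not N _ m
        have hAsum : ∑ u ∈ A, m u = (A.card : ℤ) * σ x := by
          have hc : ∀ u ∈ A, m u = σ x := by
            intro u hu
            rw [hA, Finset.mem_filter] at hu
            rw [hmK u hu.2.1, hu.2.2]
          rw [Finset.sum_congr rfl hc, Finset.sum_const, nsmul_eq_mul]
        have hBlo : -(B.card : ℤ) ≤ ∑ u ∈ B, m u := by
          have := Finset.card_nsmul_le_sum B m (-1) (fun u _ => (hmb u).1)
          simpa using this
        have hBhi : ∑ u ∈ B, m u ≤ (B.card : ℤ) := by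
          have := Finset.sum_le_card_nsmul B m 1 (fun u _ => (hmb u).2)
          simpa using this
        have hsub1 : Pp ⊆ A ∪ {y} ∪ Out := by
          intro u hu
          rw [hPp, Finset.mem_filter] at hu
          have h2u : σ x * σ u = 1 := hu.2
          have hsame : σ u = σ x := by
            rcases hσ x with h | h <;> rcases hσ u with h' | h' <;>
              rw [h, h'] at h2u ⊢ <;> omega
          by_cases hy : u = y
          · exact Finset.mem_union_left _ (Finset.mem_union_right _ (by simp [hy]))
          by_cases hk : u ∈ K
          · refine Finset.mem_union_left _ (Finset.mem_union_left _ ?_)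
            rw [hA, Finset.mem_filter]
            exact ⟨Finset.mem_erase.mpr ⟨hy, hu.1⟩, hk, hsame⟩
          · refine Finset.mem_union_right _ ?_
            rw [hOut, Finset.mem_filter]
            exact ⟨hu.1, hk⟩
        have hsub2 : B ⊆ Pm ∪ Out := by
          intro u hu
          rw [hB, Finset.mem_filter] at hu
          have hadj : u ∈ G.neighborFinset x := Finset.mem_of_mem_erase hu.1
          by_cases hk : u ∈ K
          · have hne : σ u ≠ σ x := fun h => hu.2 ⟨hk, h⟩
            have hval : σ x * σ u = -1 := by
              rcases hσ x with h | h <;> rcases hσ u with h' | h' <;>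
                rw [h, h'] at hne ⊢ <;> omega
            refine Finset.mem_union_left _ ?_
            rw [hPm, Finset.mem_filter]
            exact ⟨hadj, hval⟩
          · refine Finset.mem_union_right _ ?_
            rw [hOut, Finset.mem_filter]
            exact ⟨hadj, hk⟩
        have hc1 : Pp.card ≤ A.card + 1 + Out.card := by
          have h1' := Finset.card_le_card hsub1
          have h2' := Finset.card_union_le (A ∪ {y}) Out
          have h3' := Finset.card_union_le A ({y} : Finset V)
          simp only [Finset.card_singleton] at h3'
          omega
        have hc2 : B.card ≤ Pm.card + Out.card := by
          have h1' := Finset.card_le_card hsub2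
          have h2' := Finset.card_union_le Pm Out
          omega
        have hkey : 1 ≤ (A.card : ℤ) - B.card := by
          have hO : (Out.card : ℝ) ≤ 100 := by exact_mod_cast h3
          have hA' : (Pp.card : ℝ) ≤ (A.card : ℝ) + 1 + Out.card := by exact_mod_cast hc1
          have hB' : (B.card : ℝ) ≤ (Pm.card : ℝ) + Out.card := by exact_mod_cast hc2
          have hfin : (1 : ℝ) ≤ (A.card : ℝ) - B.card := by
            have := hp.1
            have := hm.2
            linarith
          exact_mod_cast hfin
        rcases hσ x with h | h
        · rw [h]
          apply psiZ_eq_one'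
          rw [← hsplit, hAsum, h]
          linarith [hBlo, hkey]
        · rw [h]
          apply psiZ_eq_neg_one'
          rw [← hsplit, hAsum, h]
          linarith [hBhi, hkey]
      constructor
      · simp only [wpMsg]
        rw [← hN]
        exact key _ (fun u => hbnd Set.univ s u x) (fun u hu => (ih u hu x).1)
      · simp only [wpMsg]
        rw [← hN]
        exact key _ (fun u => hbnd K s u x) (fun u hu => (ih u hu x).2)
  exact ⟨(main t v hvK w).1, (main t v hvK w).2⟩
end
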